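/- arXiv:2403.02104 — 2 statements merged into one kernel-verified Lean document; each statement's English description precedes it below -/
import Mathlib

section
/- Let m be an integer with 5 ≤ m ≤ 12 and set V(ρ) = (1 − ρ²)^m for ρ ∈ [0,1]. Then ∫_{B^m} ( V''(r) + (m−1)V'(r)/r + 2(m−4)V(r)/r² )² dx + 32(2−m) ∫_{B^m} V(r)²/r⁴ dx < 0, where r = r(x) = |x| and B^m is the open unit ball in ℝ^m. (This quantity is the second variation of the bienergy at the proper biharmonic map ũ of Theorem 1.1 in the direction determined by V, so ũ is an unstable critical point of the bienergy.) -/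
noncomputable section

open Real MeasureTheory

set_option maxHeartbeats 4000000

def Vtest (m : ℕ) (ρ : ℝ) : ℝ := (1 - ρ ^ 2) ^ m

lemma hasDerivAt_Vtest (m : ℕ) (ρ : ℝ) :
    HasDerivAt (Vtest m) ((m : ℝ) * (1 - ρ ^ 2) ^ (m - 1) * (-2 * ρ)) ρ := by
  have h : HasDerivAt (fun x : ℝ => 1 - x ^ 2) (-2 * ρ) ρ := by
    simpa using (hasDerivAt_pow 2 ρ).const_sub 1
  exact h.pow m

lemma deriv_Vtest (m : ℕ) :
    deriv (Vtest m) = fun ρ : ℝ => (m : ℝ) * (1 - ρ ^ 2) ^ (m - 1) * (-2 * ρ) :=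
  funext fun ρ => (hasDerivAt_Vtest m ρ).deriv

lemma hasDerivAt_Vtest' (m : ℕ) (ρ : ℝ) :
    HasDerivAt (fun ρ : ℝ => (m : ℝ) * (1 - ρ ^ 2) ^ (m - 1) * (-2 * ρ))
      ((m : ℝ) * (((m - 1 : ℕ) : ℝ) * (1 - ρ ^ 2) ^ (m - 1 - 1) * (-2 * ρ)) * (-2 * ρ)
        + (m : ℝ) * (1 - ρ ^ 2) ^ (m - 1) * (-2)) ρ := by
  have h : HasDerivAt (fun x : ℝ => 1 - x ^ 2) (-2 * ρ) ρ := by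
    simpa using (hasDerivAt_pow 2 ρ).const_sub 1
  have h2 := (h.pow (m - 1)).const_mul (m : ℝ)
  have h3 : HasDerivAt (fun x : ℝ => -2 * x) (-2) ρ := by
    simpa using (hasDerivAt_id ρ).const_mul (-2 : ℝ)
  have h4 := h2.mul h3
  exact h4

lemma deriv2_Vtest (m : ℕ) :
    deriv (deriv (Vtest m)) = fun ρ : ℝ =>
      (m : ℝ) * (((m - 1 : ℕ) : ℝ) * (1 - ρ ^ 2) ^ (m - 1 - 1) * (-2 * ρ)) * (-2 * ρ)
        + (m : ℝ) * (1 - ρ ^ 2) ^ (m - 1) * (-2) := by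
  rw [deriv_Vtest]
  exact funext fun ρ => (hasDerivAt_Vtest' m ρ).deriv

lemma ball_int (m : ℕ) (hm : 1 ≤ m) (f : ℝ → ℝ) :
    ∫ x in Metric.ball (0 : EuclideanSpace ℝ (Fin m)) 1, f ‖x‖
      = (m : ℝ) * (volume (Metric.ball (0 : EuclideanSpace ℝ (Fin m)) 1)).toReal
          * ∫ r in Set.Ioo (0 : ℝ) 1, r ^ (m - 1) * f r := by
  haveI : NeZero m := ⟨by omega⟩
  have h1 : ∫ x in Metric.ball (0 : EuclideanSpace ℝ (Fin m)) 1, f ‖x‖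
      = ∫ x : EuclideanSpace ℝ (Fin m), (Set.indicator (Set.Iio (1 : ℝ)) f) ‖x‖ := by
    rw [← MeasureTheory.integral_indicator measurableSet_ball]
    congr 1
    funext x
    by_cases hx : ‖x‖ < 1
    · simp [Set.indicator, hx, mem_ball_zero_iff]
    · simp [Set.indicator, hx, mem_ball_zero_iff]
  rw [h1, MeasureTheory.integral_fun_norm_addHaar volume (Set.indicator (Set.Iio (1 : ℝ)) f)]
  rw [finrank_euclideanSpace_fin, nsmul_eq_mul, smul_eq_mul]
  have h2 : ∫ y in Set.Ioi (0 : ℝ), y ^ (m - 1) • Set.indicator (Set.Iio 1) f y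
      = ∫ r in Set.Ioo (0 : ℝ) 1, r ^ (m - 1) * f r := by
    have h3 : ∀ y : ℝ, y ^ (m - 1) • Set.indicator (Set.Iio 1) f y
        = Set.indicator (Set.Iio 1) (fun y => y ^ (m - 1) * f y) y := by
      intro y
      by_cases hy : y ∈ Set.Iio (1 : ℝ) <;> simp [Set.indicator, hy]
    simp_rw [h3]
    rw [MeasureTheory.setIntegral_indicator measurableSet_Iio, Set.Ioi_inter_Iio]
  rw [h2]
  rw [measureReal_def]
  ring

theorem stmt9 (m : ℕ) (hm : 5 ≤ m) (hm' : m ≤ 12) :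
    (∫ x in Metric.ball (0 : EuclideanSpace ℝ (Fin m)) 1,
        (deriv (deriv (Vtest m)) ‖x‖ + ((m : ℝ) - 1) * deriv (Vtest m) ‖x‖ / ‖x‖
          + 2 * ((m : ℝ) - 4) * Vtest m ‖x‖ / ‖x‖ ^ 2) ^ 2)
      + 32 * (2 - (m : ℝ)) *
        (∫ x in Metric.ball (0 : EuclideanSpace ℝ (Fin m)) 1,
          (Vtest m ‖x‖) ^ 2 / ‖x‖ ^ 4) < 0 := by
  have hm1 : 1 ≤ m := by omega
  have key : (∫ r in Set.Ioo (0 : ℝ) 1, r ^ (m - 1) *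
              (deriv (deriv (Vtest m)) r + ((m : ℝ) - 1) * deriv (Vtest m) r / r
                + 2 * ((m : ℝ) - 4) * Vtest m r / r ^ 2) ^ 2)
      + 32 * (2 - (m : ℝ)) *
        (∫ r in Set.Ioo (0 : ℝ) 1, r ^ (m - 1) * (Vtest m r ^ 2 / r ^ 4)) < 0 := by
    clear hm1
    interval_cases m
    · have hpoly1 : Set.EqOn (fun r : ℝ => r ^ (5 - 1) * (deriv (deriv (Vtest 5)) r + (((5:ℕ) : ℝ) - 1) * deriv (Vtest 5) r / r + 2 * (((5:ℕ) : ℝ) - 4) * Vtest 5 r / r ^ 2) ^ 2) (fun r : ℝ => (4 : ℝ) * r ^ 0 + (-240 : ℝ) * r ^ 2 + (4800 : ℝ) * r ^ 4 + (-38240 : ℝ) * r ^ 6 + (159000 : ℝ) * r ^ 8 + (-390528 : ℝ) * r ^ 10 + (599440 : ℝ) * r ^ 12 + (-583200 : ℝ) * r ^ 14 + (350340 : ℝ) * r ^ 16 + (-118800 : ℝ) * r ^ 18 + (17424 : ℝ) * r ^ 20) (Set.Ioo 0 1) := by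
        intro r hr
        have hr0 : r ≠ 0 := ne_of_gt hr.1
        simp only [deriv2_Vtest]
        simp only [deriv_Vtest]
        simp only [Vtest]
        norm_num
        field_simp
        ring
      have hpoly2 : Set.EqOn (fun r : ℝ => r ^ (5 - 1) * (Vtest 5 r ^ 2 / r ^ 4)) (fun r : ℝ => (1 : ℝ) * r ^ 0 + (-10 : ℝ) * r ^ 2 + (45 : ℝ) * r ^ 4 + (-120 : ℝ) * r ^ 6 + (210 : ℝ) * r ^ 8 + (-252 : ℝ) * r ^ 10 + (210 : ℝ) * r ^ 12 + (-120 : ℝ) * r ^ 14 + (45 : ℝ) * r ^ 16 + (-10 : ℝ) * r ^ 18 + (1 : ℝ) * r ^ 20) (Set.Ioo 0 1) := by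
        intro r hr
        have hr0 : r ≠ 0 := ne_of_gt hr.1
        simp only [Vtest]
        field_simp
        ring
      have hQ1 : ∀ x ∈ Set.uIcc (0:ℝ) 1, HasDerivAt (fun y : ℝ => (4 : ℝ) / 1 * y ^ 1 + (-240 : ℝ) / 3 * y ^ 3 + (4800 : ℝ) / 5 * y ^ 5 + (-38240 : ℝ) / 7 * y ^ 7 + (159000 : ℝ) / 9 * y ^ 9 + (-390528 : ℝ) / 11 * y ^ 11 + (599440 : ℝ) / 13 * y ^ 13 + (-583200 : ℝ) / 15 * y ^ 15 + (350340 : ℝ) / 17 * y ^ 17 + (-118800 : ℝ) / 19 * y ^ 19 + (17424 : ℝ) / 21 * y ^ 21) ((4 : ℝ) * x ^ 0 + (-240 : ℝ) * x ^ 2 + (4800 : ℝ) * x ^ 4 + (-38240 : ℝ) * x ^ 6 + (159000 : ℝ) * x ^ 8 + (-390528 : ℝ) * x ^ 10 + (599440 : ℝ) * x ^ 12 + (-583200 : ℝ) * x ^ 14 + (350340 : ℝ) * x ^ 16 + (-118800 : ℝ) * x ^ 18 + (17424 : ℝ) * x ^ 20) x := by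
        intro x _
        have h := ((((((((((((hasDerivAt_pow 1 x).const_mul ((4 : ℝ) / 1)).add ((hasDerivAt_pow 3 x).const_mul ((-240 : ℝ) / 3))).add ((hasDerivAt_pow 5 x).const_mul ((4800 : ℝ) / 5))).add ((hasDerivAt_pow 7 x).const_mul ((-38240 : ℝ) / 7))).add ((hasDerivAt_pow 9 x).const_mul ((159000 : ℝ) / 9))).add ((hasDerivAt_pow 11 x).const_mul ((-390528 : ℝ) / 11))).add ((hasDerivAt_pow 13 x).const_mul ((599440 : ℝ) / 13))).add ((hasDerivAt_pow 15 x).const_mul ((-583200 : ℝ) / 15))).add ((hasDerivAt_pow 17 x).const_mul ((350340 : ℝ) / 17))).add ((hasDerivAt_pow 19 x).const_mul ((-118800 : ℝ) / 19))).add ((hasDerivAt_pow 21 x).const_mul ((17424 : ℝ) / 21)))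
        refine h.congr_deriv ?_
        norm_num
        try ring
      have hQ2 : ∀ x ∈ Set.uIcc (0:ℝ) 1, HasDerivAt (fun y : ℝ => (1 : ℝ) / 1 * y ^ 1 + (-10 : ℝ) / 3 * y ^ 3 + (45 : ℝ) / 5 * y ^ 5 + (-120 : ℝ) / 7 * y ^ 7 + (210 : ℝ) / 9 * y ^ 9 + (-252 : ℝ) / 11 * y ^ 11 + (210 : ℝ) / 13 * y ^ 13 + (-120 : ℝ) / 15 * y ^ 15 + (45 : ℝ) / 17 * y ^ 17 + (-10 : ℝ) / 19 * y ^ 19 + (1 : ℝ) / 21 * y ^ 21) ((1 : ℝ) * x ^ 0 + (-10 : ℝ) * x ^ 2 + (45 : ℝ) * x ^ 4 + (-120 : ℝ) * x ^ 6 + (210 : ℝ) * x ^ 8 + (-252 : ℝ) * x ^ 10 + (210 : ℝ) * x ^ 12 + (-120 : ℝ) * x ^ 14 + (45 : ℝ) * x ^ 16 + (-10 : ℝ) * x ^ 18 + (1 : ℝ) * x ^ 20) x := by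
        intro x _
        have h := ((((((((((((hasDerivAt_pow 1 x).const_mul ((1 : ℝ) / 1)).add ((hasDerivAt_pow 3 x).const_mul ((-10 : ℝ) / 3))).add ((hasDerivAt_pow 5 x).const_mul ((45 : ℝ) / 5))).add ((hasDerivAt_pow 7 x).const_mul ((-120 : ℝ) / 7))).add ((hasDerivAt_pow 9 x).const_mul ((210 : ℝ) / 9))).add ((hasDerivAt_pow 11 x).const_mul ((-252 : ℝ) / 11))).add ((hasDerivAt_pow 13 x).const_mul ((210 : ℝ) / 13))).add ((hasDerivAt_pow 15 x).const_mul ((-120 : ℝ) / 15))).add ((hasDerivAt_pow 17 x).const_mul ((45 : ℝ) / 17))).add ((hasDerivAt_pow 19 x).const_mul ((-10 : ℝ) / 19))).add ((hasDerivAt_pow 21 x).const_mul ((1 : ℝ) / 21)))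
        refine h.congr_deriv ?_
        norm_num
        try ring
      rw [MeasureTheory.setIntegral_congr_fun measurableSet_Ioo hpoly1,
          MeasureTheory.setIntegral_congr_fun measurableSet_Ioo hpoly2,
          ← MeasureTheory.integral_Ioc_eq_integral_Ioo, ← MeasureTheory.integral_Ioc_eq_integral_Ioo,
          ← intervalIntegral.integral_of_le (zero_le_one : (0:ℝ) ≤ 1),
          ← intervalIntegral.integral_of_le (zero_le_one : (0:ℝ) ≤ 1),
          intervalIntegral.integral_eq_sub_of_hasDerivAt hQ1 ((by fun_prop : Continuous (fun r : ℝ => (4 : ℝ) * r ^ 0 + (-240 : ℝ) * r ^ 2 + (4800 : ℝ) * r ^ 4 + (-38240 : ℝ) * r ^ 6 + (159000 : ℝ) * r ^ 8 + (-390528 : ℝ) * r ^ 10 + (599440 : ℝ) * r ^ 12 + (-583200 : ℝ) * r ^ 14 + (350340 : ℝ) * r ^ 16 + (-118800 : ℝ) * r ^ 18 + (17424 : ℝ) * r ^ 20)).intervalIntegrable 0 1),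
          intervalIntegral.integral_eq_sub_of_hasDerivAt hQ2 ((by fun_prop : Continuous (fun r : ℝ => (1 : ℝ) * r ^ 0 + (-10 : ℝ) * r ^ 2 + (45 : ℝ) * r ^ 4 + (-120 : ℝ) * r ^ 6 + (210 : ℝ) * r ^ 8 + (-252 : ℝ) * r ^ 10 + (210 : ℝ) * r ^ 12 + (-120 : ℝ) * r ^ 14 + (45 : ℝ) * r ^ 16 + (-10 : ℝ) * r ^ 18 + (1 : ℝ) * r ^ 20)).intervalIntegrable 0 1)]
      norm_num
    · have hpoly1 : Set.EqOn (fun r : ℝ => r ^ (6 - 1) * (deriv (deriv (Vtest 6)) r + (((6:ℕ) : ℝ) - 1) * deriv (Vtest 6) r / r + 2 * (((6:ℕ) : ℝ) - 4) * Vtest 6 r / r ^ 2) ^ 2) (fun r : ℝ => (16 : ℝ) * r ^ 1 + (-768 : ℝ) * r ^ 3 + (13536 : ℝ) * r ^ 5 + (-113920 : ℝ) * r ^ 7 + (549360 : ℝ) * r ^ 9 + (-1677312 : ℝ) * r ^ 11 + (3425856 : ℝ) * r ^ 13 + (-4810752 : ℝ) * r ^ 15 + (4673520 : ℝ) * r ^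 17 + (-3093760 : ℝ) * r ^ 19 + (1334496 : ℝ) * r ^ 21 + (-338688 : ℝ) * r ^ 23 + (38416 : ℝ) * r ^ 25) (Set.Ioo 0 1) := by
        intro r hr
        have hr0 : r ≠ 0 := ne_of_gt hr.1
        simp only [deriv2_Vtest]
        simp only [deriv_Vtest]
        simp only [Vtest]
        norm_num
        field_simp
        ring
      have hpoly2 : Set.EqOn (fun r : ℝ => r ^ (6 - 1) * (Vtest 6 r ^ 2 / r ^ 4)) (fun r : ℝ => (1 : ℝ) * r ^ 1 + (-12 : ℝ) * r ^ 3 + (66 : ℝ) * r ^ 5 + (-220 : ℝ) * r ^ 7 + (495 : ℝ) * r ^ 9 + (-792 : ℝ) * r ^ 11 + (924 : ℝ) * r ^ 13 + (-792 : ℝ) * r ^ 15 + (495 : ℝ) * r ^ 17 + (-220 : ℝ) * r ^ 19 + (66 : ℝ) * r ^ 21 + (-12 : ℝ) * r ^ 23 + (1 : ℝ) * r ^ 25) (Set.Ioo 0 1) := by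
        intro r hr
        have hr0 : r ≠ 0 := ne_of_gt hr.1
        simp only [Vtest]
        field_simp
        ring
      have hQ1 : ∀ x ∈ Set.uIcc (0:ℝ) 1, HasDerivAt (fun y : ℝ => (16 : ℝ) / 2 * y ^ 2 + (-768 : ℝ) / 4 * y ^ 4 + (13536 : ℝ) / 6 * y ^ 6 + (-113920 : ℝ) / 8 * y ^ 8 + (549360 : ℝ) / 10 * y ^ 10 + (-1677312 : ℝ) / 12 * y ^ 12 + (3425856 : ℝ) / 14 * y ^ 14 + (-4810752 : ℝ) / 16 * y ^ 16 + (4673520 : ℝ) / 18 * y ^ 18 + (-3093760 : ℝ) / 20 * y ^ 20 + (1334496 : ℝ) / 22 * y ^ 22 + (-338688 : ℝ) / 24 * y ^ 24 + (38416 : ℝ) / 26 * y ^ 26) ((16 : ℝ) * x ^ 1 + (-768 : ℝ) * x ^ 3 + (13536 : ℝ) * x ^ 5 + (-113920 : ℝ) * x ^ 7 + (549360 : ℝ) * x ^ 9 + (-1677312 : ℝ) * x ^ 11 + (3425856 : ℝ) * x ^ 13 + (-4810752 : ℝ) * x ^ 15 + (4673520 : ℝ) * x ^ 17 + (-3093760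 : ℝ) * x ^ 19 + (1334496 : ℝ) * x ^ 21 + (-338688 : ℝ) * x ^ 23 + (38416 : ℝ) * x ^ 25) x := by
        intro x _
        have h := ((((((((((((((hasDerivAt_pow 2 x).const_mul ((16 : ℝ) / 2)).add ((hasDerivAt_pow 4 x).const_mul ((-768 : ℝ) / 4))).add ((hasDerivAt_pow 6 x).const_mul ((13536 : ℝ) / 6))).add ((hasDerivAt_pow 8 x).const_mul ((-113920 : ℝ) / 8))).add ((hasDerivAt_pow 10 x).const_mul ((549360 : ℝ) / 10))).add ((hasDerivAt_pow 12 x).const_mul ((-1677312 : ℝ) / 12))).add ((hasDerivAt_pow 14 x).const_mul ((3425856 : ℝ) / 14))).add ((hasDerivAt_pow 16 x).const_mul ((-4810752 : ℝ) / 16))).add ((hasDerivAt_pow 18 x).const_mul ((4673520 : ℝ) / 18))).add ((hasDerivAt_pow 20 x).const_mul ((-3093760 : ℝ) / 20))).add ((hasDerivAt_pow 22 x).const_mul ((1334496 : ℝ) / 22))).add ((hasDerivAt_pow 24 x).const_mul ((-338688 : ℝ) / 24))).add ((hasDerivAt_pow 26 x).const_mul ((38416 : ℝ) / 26)))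
        refine h.congr_deriv ?_
        norm_num
        try ring
      have hQ2 : ∀ x ∈ Set.uIcc (0:ℝ) 1, HasDerivAt (fun y : ℝ => (1 : ℝ) / 2 * y ^ 2 + (-12 : ℝ) / 4 * y ^ 4 + (66 : ℝ) / 6 * y ^ 6 + (-220 : ℝ) / 8 * y ^ 8 + (495 : ℝ) / 10 * y ^ 10 + (-792 : ℝ) / 12 * y ^ 12 + (924 : ℝ) / 14 * y ^ 14 + (-792 : ℝ) / 16 * y ^ 16 + (495 : ℝ) / 18 * y ^ 18 + (-220 : ℝ) / 20 * y ^ 20 + (66 : ℝ) / 22 * y ^ 22 + (-12 : ℝ) / 24 * y ^ 24 + (1 : ℝ) / 26 * y ^ 26) ((1 : ℝ) * x ^ 1 + (-12 : ℝ) * x ^ 3 + (66 : ℝ) * x ^ 5 + (-220 : ℝ) * x ^ 7 + (495 : ℝ) * x ^ 9 + (-792 : ℝ) * x ^ 11 + (924 : ℝ) * x ^ 13 + (-792 : ℝ) * x ^ 15 + (495 : ℝ) * x ^ 17 + (-220 : ℝ) * x ^ 19 + (66 : ℝ) * x ^ 21 + (-12 : ℝ) * x ^ 23 + (1 : ℝ)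 * x ^ 25) x := by
        intro x _
        have h := ((((((((((((((hasDerivAt_pow 2 x).const_mul ((1 : ℝ) / 2)).add ((hasDerivAt_pow 4 x).const_mul ((-12 : ℝ) / 4))).add ((hasDerivAt_pow 6 x).const_mul ((66 : ℝ) / 6))).add ((hasDerivAt_pow 8 x).const_mul ((-220 : ℝ) / 8))).add ((hasDerivAt_pow 10 x).const_mul ((495 : ℝ) / 10))).add ((hasDerivAt_pow 12 x).const_mul ((-792 : ℝ) / 12))).add ((hasDerivAt_pow 14 x).const_mul ((924 : ℝ) / 14))).add ((hasDerivAt_pow 16 x).const_mul ((-792 : ℝ) / 16))).add ((hasDerivAt_pow 18 x).const_mul ((495 : ℝ) / 18))).add ((hasDerivAt_pow 20 x).const_mul ((-220 : ℝ) / 20))).add ((hasDerivAt_pow 22 x).const_mul ((66 : ℝ) / 22))).add ((hasDerivAt_pow 24 x).const_mul ((-12 : ℝ) / 24))).add ((hasDerivAt_pow 26 x).const_mul ((1 : ℝ) / 26)))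
        refine h.congr_deriv ?_
        norm_num
        try ring
      rw [MeasureTheory.setIntegral_congr_fun measurableSet_Ioo hpoly1,
          MeasureTheory.setIntegral_congr_fun measurableSet_Ioo hpoly2,
          ← MeasureTheory.integral_Ioc_eq_integral_Ioo, ← MeasureTheory.integral_Ioc_eq_integral_Ioo,
          ← intervalIntegral.integral_of_le (zero_le_one : (0:ℝ) ≤ 1),
          ← intervalIntegral.integral_of_le (zero_le_one : (0:ℝ) ≤ 1),
          intervalIntegral.integral_eq_sub_of_hasDerivAt hQ1 ((by fun_prop : Continuous (fun r : ℝ => (16 : ℝ) * r ^ 1 + (-768 : ℝ) * r ^ 3 + (13536 : ℝ) * r ^ 5 + (-113920 : ℝ) * r ^ 7 + (549360 : ℝ) * r ^ 9 + (-1677312 : ℝ) * r ^ 11 + (3425856 : ℝ) * r ^ 13 + (-4810752 : ℝ) * r ^ 15 + (4673520 : ℝ) * r ^ 17 + (-3093760 : ℝ) * r ^ 19 + (1334496 : ℝ) * r ^ 21 + (-338688 : ℝ) * r ^ 23 + (38416 : ℝ) * r ^ 25)).intervalIntegrable 0 1),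
          intervalIntegral.integral_eq_sub_of_hasDerivAt hQ2 ((by fun_prop : Continuous (fun r : ℝ => (1 : ℝ) * r ^ 1 + (-12 : ℝ) * r ^ 3 + (66 : ℝ) * r ^ 5 + (-220 : ℝ) * r ^ 7 + (495 : ℝ) * r ^ 9 + (-792 : ℝ) * r ^ 11 + (924 : ℝ) * r ^ 13 + (-792 : ℝ) * r ^ 15 + (495 : ℝ) * r ^ 17 + (-220 : ℝ) * r ^ 19 + (66 : ℝ) * r ^ 21 + (-12 : ℝ) * r ^ 23 + (1 : ℝ) * r ^ 25)).intervalIntegrable 0 1)]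
      norm_num
    · have hpoly1 : Set.EqOn (fun r : ℝ => r ^ (7 - 1) * (deriv (deriv (Vtest 7)) r + (((7:ℕ) : ℝ) - 1) * deriv (Vtest 7) r / r + 2 * (((7:ℕ) : ℝ) - 4) * Vtest 7 r / r ^ 2) ^ 2) (fun r : ℝ => (36 : ℝ) * r ^ 2 + (-1680 : ℝ) * r ^ 4 + (30184 : ℝ) * r ^ 6 + (-277200 : ℝ) * r ^ 8 + (1529724 : ℝ) * r ^ 10 + (-5562592 : ℝ) * r ^ 12 + (14076720 : ℝ) * r ^ 14 + (-25597728 : ℝ) * r ^ 16 + (34002780 : ℝ) * r ^ 18 + (-33113808 : ℝ) * r ^ 20 + (23422056 : ℝ) * r ^ 22 + (-11725840 : ℝ) * r ^ 24 + (3943044 : ℝ) * r ^ 26 + (-799680 : ℝ) * r ^ 28 + (73984 : ℝ) * r ^ 30) (Set.Ioo 0 1) := by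
        intro r hr
        have hr0 : r ≠ 0 := ne_of_gt hr.1
        simp only [deriv2_Vtest]
        simp only [deriv_Vtest]
        simp only [Vtest]
        norm_num
        field_simp
        ring
      have hpoly2 : Set.EqOn (fun r : ℝ => r ^ (7 - 1) * (Vtest 7 r ^ 2 / r ^ 4)) (fun r : ℝ => (1 : ℝ) * r ^ 2 + (-14 : ℝ) * r ^ 4 + (91 : ℝ) * r ^ 6 + (-364 : ℝ) * r ^ 8 + (1001 : ℝ) * r ^ 10 + (-2002 : ℝ) * r ^ 12 + (3003 : ℝ) * r ^ 14 + (-3432 : ℝ) * r ^ 16 + (3003 : ℝ) * r ^ 18 + (-2002 : ℝ) * r ^ 20 + (1001 : ℝ) * r ^ 22 + (-364 : ℝ) * r ^ 24 + (91 : ℝ) * r ^ 26 + (-14 : ℝ) * r ^ 28 + (1 : ℝ) * r ^ 30) (Set.Ioo 0 1) := by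
        intro r hr
        have hr0 : r ≠ 0 := ne_of_gt hr.1
        simp only [Vtest]
        field_simp
        ring
      have hQ1 : ∀ x ∈ Set.uIcc (0:ℝ) 1, HasDerivAt (fun y : ℝ => (36 : ℝ) / 3 * y ^ 3 + (-1680 : ℝ) / 5 * y ^ 5 + (30184 : ℝ) / 7 * y ^ 7 + (-277200 : ℝ) / 9 * y ^ 9 + (1529724 : ℝ) / 11 * y ^ 11 + (-5562592 : ℝ) / 13 * y ^ 13 + (14076720 : ℝ) / 15 * y ^ 15 + (-25597728 : ℝ) / 17 * y ^ 17 + (34002780 : ℝ) / 19 * y ^ 19 + (-33113808 : ℝ) / 21 * y ^ 21 + (23422056 : ℝ) / 23 * y ^ 23 + (-11725840 : ℝ) / 25 * y ^ 25 + (3943044 : ℝ) / 27 * y ^ 27 + (-799680 : ℝ) / 29 * y ^ 29 + (73984 : ℝ) / 31 * y ^ 31) ((36 : ℝ) * x ^ 2 + (-1680 : ℝ) * x ^ 4 + (30184 : ℝ) * x ^ 6 + (-277200 : ℝ) * x ^ 8 + (1529724 : ℝ) * x ^ 10 + (-5562592 : ℝ) * x ^ 12 + (14076720 : ℝ) * x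 ^ 14 + (-25597728 : ℝ) * x ^ 16 + (34002780 : ℝ) * x ^ 18 + (-33113808 : ℝ) * x ^ 20 + (23422056 : ℝ) * x ^ 22 + (-11725840 : ℝ) * x ^ 24 + (3943044 : ℝ) * x ^ 26 + (-799680 : ℝ) * x ^ 28 + (73984 : ℝ) * x ^ 30) x := by
        intro x _
        have h := ((((((((((((((((hasDerivAt_pow 3 x).const_mul ((36 : ℝ) / 3)).add ((hasDerivAt_pow 5 x).const_mul ((-1680 : ℝ) / 5))).add ((hasDerivAt_pow 7 x).const_mul ((30184 : ℝ) / 7))).add ((hasDerivAt_pow 9 x).const_mul ((-277200 : ℝ) / 9))).add ((hasDerivAt_pow 11 x).const_mul ((1529724 : ℝ) / 11))).add ((hasDerivAt_pow 13 x).const_mul ((-5562592 : ℝ) / 13))).add ((hasDerivAt_pow 15 x).const_mul ((14076720 : ℝ) / 15))).add ((hasDerivAt_pow 17 x).const_mul ((-25597728 : ℝ) / 17))).add ((hasDerivAt_pow 19 x).const_mul ((34002780 : ℝ) / 19))).add ((hasDerivAt_pow 21 x).const_mul ((-33113808 : ℝ) / 21))).add ((hasDerivAt_pow 23 x).const_mul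 ((23422056 : ℝ) / 23))).add ((hasDerivAt_pow 25 x).const_mul ((-11725840 : ℝ) / 25))).add ((hasDerivAt_pow 27 x).const_mul ((3943044 : ℝ) / 27))).add ((hasDerivAt_pow 29 x).const_mul ((-799680 : ℝ) / 29))).add ((hasDerivAt_pow 31 x).const_mul ((73984 : ℝ) / 31)))
        refine h.congr_deriv ?_
        norm_num
        try ring
      have hQ2 : ∀ x ∈ Set.uIcc (0:ℝ) 1, HasDerivAt (fun y : ℝ => (1 : ℝ) / 3 * y ^ 3 + (-14 : ℝ) / 5 * y ^ 5 + (91 : ℝ) / 7 * y ^ 7 + (-364 : ℝ) / 9 * y ^ 9 + (1001 : ℝ) / 11 * y ^ 11 + (-2002 : ℝ) / 13 * y ^ 13 + (3003 : ℝ) / 15 * y ^ 15 + (-3432 : ℝ) / 17 * y ^ 17 + (3003 : ℝ) / 19 * y ^ 19 + (-2002 : ℝ) / 21 * y ^ 21 + (1001 : ℝ) / 23 * y ^ 23 + (-364 : ℝ) / 25 * y ^ 25 + (91 : ℝ) / 27 * y ^ 27 + (-14 : ℝ) / 29 * y ^ 29 + (1 : ℝ) / 31 * y ^ 31) ((1 :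 ℝ) * x ^ 2 + (-14 : ℝ) * x ^ 4 + (91 : ℝ) * x ^ 6 + (-364 : ℝ) * x ^ 8 + (1001 : ℝ) * x ^ 10 + (-2002 : ℝ) * x ^ 12 + (3003 : ℝ) * x ^ 14 + (-3432 : ℝ) * x ^ 16 + (3003 : ℝ) * x ^ 18 + (-2002 : ℝ) * x ^ 20 + (1001 : ℝ) * x ^ 22 + (-364 : ℝ) * x ^ 24 + (91 : ℝ) * x ^ 26 + (-14 : ℝ) * x ^ 28 + (1 : ℝ) * x ^ 30) x := by
        intro x _
        have h := ((((((((((((((((hasDerivAt_pow 3 x).const_mul ((1 : ℝ) / 3)).add ((hasDerivAt_pow 5 x).const_mul ((-14 : ℝ) / 5))).add ((hasDerivAt_pow 7 x).const_mul ((91 : ℝ) / 7))).add ((hasDerivAt_pow 9 x).const_mul ((-364 : ℝ) / 9))).add ((hasDerivAt_pow 11 x).const_mul ((1001 : ℝ) / 11))).add ((hasDerivAt_pow 13 x).const_mul ((-2002 : ℝ) / 13))).add ((hasDerivAt_pow 15 x).const_mul ((3003 : ℝ) / 15))).add ((hasDerivAt_pow 17 x).const_mul ((-3432 : ℝ) /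 17))).add ((hasDerivAt_pow 19 x).const_mul ((3003 : ℝ) / 19))).add ((hasDerivAt_pow 21 x).const_mul ((-2002 : ℝ) / 21))).add ((hasDerivAt_pow 23 x).const_mul ((1001 : ℝ) / 23))).add ((hasDerivAt_pow 25 x).const_mul ((-364 : ℝ) / 25))).add ((hasDerivAt_pow 27 x).const_mul ((91 : ℝ) / 27))).add ((hasDerivAt_pow 29 x).const_mul ((-14 : ℝ) / 29))).add ((hasDerivAt_pow 31 x).const_mul ((1 : ℝ) / 31)))
        refine h.congr_deriv ?_
        norm_num
        try ring
      rw [MeasureTheory.setIntegral_congr_fun measurableSet_Ioo hpoly1,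
          MeasureTheory.setIntegral_congr_fun measurableSet_Ioo hpoly2,
          ← MeasureTheory.integral_Ioc_eq_integral_Ioo, ← MeasureTheory.integral_Ioc_eq_integral_Ioo,
          ← intervalIntegral.integral_of_le (zero_le_one : (0:ℝ) ≤ 1),
          ← intervalIntegral.integral_of_le (zero_le_one : (0:ℝ) ≤ 1),
          intervalIntegral.integral_eq_sub_of_hasDerivAt hQ1 ((by fun_prop : Continuous (fun r : ℝ => (36 : ℝ) * r ^ 2 + (-1680 : ℝ) * r ^ 4 + (30184 : ℝ) * r ^ 6 + (-277200 : ℝ) * r ^ 8 + (1529724 : ℝ) * r ^ 10 + (-5562592 : ℝ) * r ^ 12 + (14076720 : ℝ) * r ^ 14 + (-25597728 : ℝ) * r ^ 16 + (34002780 : ℝ) * r ^ 18 + (-33113808 : ℝ) * r ^ 20 + (23422056 : ℝ) * r ^ 22 + (-11725840 : ℝ) * r ^ 24 + (3943044 : ℝ) * r ^ 26 + (-799680 : ℝ) * r ^ 28 + (73984 : ℝ) * r ^ 30)).intervalIntegrable 0 1),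
          intervalIntegral.integral_eq_sub_of_hasDerivAt hQ2 ((by fun_prop : Continuous (fun r : ℝ => (1 : ℝ) * r ^ 2 + (-14 : ℝ) * r ^ 4 + (91 : ℝ) * r ^ 6 + (-364 : ℝ) * r ^ 8 + (1001 : ℝ) * r ^ 10 + (-2002 : ℝ) * r ^ 12 + (3003 : ℝ) * r ^ 14 + (-3432 : ℝ) * r ^ 16 + (3003 : ℝ) * r ^ 18 + (-2002 : ℝ) * r ^ 20 + (1001 : ℝ) * r ^ 22 + (-364 : ℝ) * r ^ 24 + (91 : ℝ) * r ^ 26 + (-14 : ℝ) * r ^ 28 + (1 : ℝ) * r ^ 30)).intervalIntegrable 0 1)]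
      norm_num
    · have hpoly1 : Set.EqOn (fun r : ℝ => r ^ (8 - 1) * (deriv (deriv (Vtest 8)) r + (((8:ℕ) : ℝ) - 1) * deriv (Vtest 8) r / r + 2 * (((8:ℕ) : ℝ) - 4) * Vtest 8 r / r ^ 2) ^ 2) (fun r : ℝ => (64 : ℝ) * r ^ 3 + (-3072 : ℝ) * r ^ 5 + (58368 : ℝ) * r ^ 7 + (-587776 : ℝ) * r ^ 9 + (3661056 : ℝ) * r ^ 11 + (-15418368 : ℝ) * r ^ 13 + (46362624 : ℝ) * r ^ 15 + (-102998016 : ℝ) * r ^ 17 + (172605312 : ℝ) * r ^ 19 + (-220582912 : ℝ) * r ^ 21 + (215491584 : ℝ) * r ^ 23 + (-159946752 : ℝ) * r ^ 25 + (88738048 : ℝ) * r ^ 27 + (-35675136 : ℝ) * r ^ 29 + (9824256 : ℝ) * r ^ 31 + (-1658880 : ℝ) * r ^ 33 + (129600 : ℝ) * r ^ 35) (Set.Ioo 0 1) := by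
        intro r hr
        have hr0 : r ≠ 0 := ne_of_gt hr.1
        simp only [deriv2_Vtest]
        simp only [deriv_Vtest]
        simp only [Vtest]
        norm_num
        field_simp
        ring
      have hpoly2 : Set.EqOn (fun r : ℝ => r ^ (8 - 1) * (Vtest 8 r ^ 2 / r ^ 4)) (fun r : ℝ => (1 : ℝ) * r ^ 3 + (-16 : ℝ) * r ^ 5 + (120 : ℝ) * r ^ 7 + (-560 : ℝ) * r ^ 9 + (1820 : ℝ) * r ^ 11 + (-4368 : ℝ) * r ^ 13 + (8008 : ℝ) * r ^ 15 + (-11440 : ℝ) * r ^ 17 + (12870 : ℝ) * r ^ 19 + (-11440 : ℝ) * r ^ 21 + (8008 : ℝ) * r ^ 23 + (-4368 : ℝ) * r ^ 25 + (1820 : ℝ) * r ^ 27 + (-560 : ℝ) * r ^ 29 + (120 : ℝ) * r ^ 31 + (-16 : ℝ) * r ^ 33 + (1 : ℝ) * r ^ 35) (Set.Ioo 0 1) := by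
        intro r hr
        have hr0 : r ≠ 0 := ne_of_gt hr.1
        simp only [Vtest]
        field_simp
        ring
      have hQ1 : ∀ x ∈ Set.uIcc (0:ℝ) 1, HasDerivAt (fun y : ℝ => (64 : ℝ) / 4 * y ^ 4 + (-3072 : ℝ) / 6 * y ^ 6 + (58368 : ℝ) / 8 * y ^ 8 + (-587776 : ℝ) / 10 * y ^ 10 + (3661056 : ℝ) / 12 * y ^ 12 + (-15418368 : ℝ) / 14 * y ^ 14 + (46362624 : ℝ) / 16 * y ^ 16 + (-102998016 : ℝ) / 18 * y ^ 18 + (172605312 : ℝ) / 20 * y ^ 20 + (-220582912 : ℝ) / 22 * y ^ 22 + (215491584 : ℝ) / 24 * y ^ 24 + (-159946752 : ℝ) / 26 * y ^ 26 + (88738048 : ℝ) / 28 * y ^ 28 + (-35675136 : ℝ) / 30 * y ^ 30 + (9824256 : ℝ) / 32 * y ^ 32 + (-1658880 : ℝ) / 34 * y ^ 34 + (129600 : ℝ) / 36 * y ^ 36) ((64 : ℝ) * x ^ 3 + (-3072 : ℝ) * x ^ 5 + (58368 : ℝ) * x ^ 7 + (-587776 : ℝ) * x ^ 9 + (3661056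 : ℝ) * x ^ 11 + (-15418368 : ℝ) * x ^ 13 + (46362624 : ℝ) * x ^ 15 + (-102998016 : ℝ) * x ^ 17 + (172605312 : ℝ) * x ^ 19 + (-220582912 : ℝ) * x ^ 21 + (215491584 : ℝ) * x ^ 23 + (-159946752 : ℝ) * x ^ 25 + (88738048 : ℝ) * x ^ 27 + (-35675136 : ℝ) * x ^ 29 + (9824256 : ℝ) * x ^ 31 + (-1658880 : ℝ) * x ^ 33 + (129600 : ℝ) * x ^ 35) x := by
        intro x _
        have h := ((((((((((((((((((hasDerivAt_pow 4 x).const_mul ((64 : ℝ) / 4)).add ((hasDerivAt_pow 6 x).const_mul ((-3072 : ℝ) / 6))).add ((hasDerivAt_pow 8 x).const_mul ((58368 : ℝ) / 8))).add ((hasDerivAt_pow 10 x).const_mul ((-587776 : ℝ) / 10))).add ((hasDerivAt_pow 12 x).const_mul ((3661056 : ℝ) / 12))).add ((hasDerivAt_pow 14 x).const_mul ((-15418368 : ℝ) / 14))).add ((hasDerivAt_pow 16 x).const_mul ((46362624 : ℝ) / 16))).add ((hasDerivAt_pow 18 x).const_mul ((-102998016 : ℝ) / 18))).add ((hasDerivAt_pow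 20 x).const_mul ((172605312 : ℝ) / 20))).add ((hasDerivAt_pow 22 x).const_mul ((-220582912 : ℝ) / 22))).add ((hasDerivAt_pow 24 x).const_mul ((215491584 : ℝ) / 24))).add ((hasDerivAt_pow 26 x).const_mul ((-159946752 : ℝ) / 26))).add ((hasDerivAt_pow 28 x).const_mul ((88738048 : ℝ) / 28))).add ((hasDerivAt_pow 30 x).const_mul ((-35675136 : ℝ) / 30))).add ((hasDerivAt_pow 32 x).const_mul ((9824256 : ℝ) / 32))).add ((hasDerivAt_pow 34 x).const_mul ((-1658880 : ℝ) / 34))).add ((hasDerivAt_pow 36 x).const_mul ((129600 : ℝ) / 36)))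
        refine h.congr_deriv ?_
        norm_num
        try ring
      have hQ2 : ∀ x ∈ Set.uIcc (0:ℝ) 1, HasDerivAt (fun y : ℝ => (1 : ℝ) / 4 * y ^ 4 + (-16 : ℝ) / 6 * y ^ 6 + (120 : ℝ) / 8 * y ^ 8 + (-560 : ℝ) / 10 * y ^ 10 + (1820 : ℝ) / 12 * y ^ 12 + (-4368 : ℝ) / 14 * y ^ 14 + (8008 : ℝ) / 16 * y ^ 16 + (-11440 : ℝ) / 18 * y ^ 18 + (12870 : ℝ) / 20 * y ^ 20 + (-11440 : ℝ) / 22 * y ^ 22 + (8008 : ℝ) / 24 * y ^ 24 + (-4368 : ℝ) / 26 * y ^ 26 + (1820 : ℝ) / 28 * y ^ 28 + (-560 : ℝ) / 30 * y ^ 30 + (120 : ℝ) / 32 * y ^ 32 + (-16 : ℝ) / 34 * y ^ 34 + (1 : ℝ) / 36 * y ^ 36) ((1 : ℝ) * x ^ 3 + (-16 : ℝ) * x ^ 5 + (120 : ℝ) * x ^ 7 + (-560 : ℝ) * x ^ 9 + (1820 : ℝ) * x ^ 11 + (-4368 : ℝ) * x ^ 13 + (8008 : ℝ) * x ^ 15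 + (-11440 : ℝ) * x ^ 17 + (12870 : ℝ) * x ^ 19 + (-11440 : ℝ) * x ^ 21 + (8008 : ℝ) * x ^ 23 + (-4368 : ℝ) * x ^ 25 + (1820 : ℝ) * x ^ 27 + (-560 : ℝ) * x ^ 29 + (120 : ℝ) * x ^ 31 + (-16 : ℝ) * x ^ 33 + (1 : ℝ) * x ^ 35) x := by
        intro x _
        have h := ((((((((((((((((((hasDerivAt_pow 4 x).const_mul ((1 : ℝ) / 4)).add ((hasDerivAt_pow 6 x).const_mul ((-16 : ℝ) / 6))).add ((hasDerivAt_pow 8 x).const_mul ((120 : ℝ) / 8))).add ((hasDerivAt_pow 10 x).const_mul ((-560 : ℝ) / 10))).add ((hasDerivAt_pow 12 x).const_mul ((1820 : ℝ) / 12))).add ((hasDerivAt_pow 14 x).const_mul ((-4368 : ℝ) / 14))).add ((hasDerivAt_pow 16 x).const_mul ((8008 : ℝ) / 16))).add ((hasDerivAt_pow 18 x).const_mul ((-11440 : ℝ) / 18))).add ((hasDerivAt_pow 20 x).const_mul ((12870 : ℝ) / 20))).add ((hasDerivAt_pow 22 x).const_mul ((-11440 : ℝ) / 22))).add ((hasDerivAt_pow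 24 x).const_mul ((8008 : ℝ) / 24))).add ((hasDerivAt_pow 26 x).const_mul ((-4368 : ℝ) / 26))).add ((hasDerivAt_pow 28 x).const_mul ((1820 : ℝ) / 28))).add ((hasDerivAt_pow 30 x).const_mul ((-560 : ℝ) / 30))).add ((hasDerivAt_pow 32 x).const_mul ((120 : ℝ) / 32))).add ((hasDerivAt_pow 34 x).const_mul ((-16 : ℝ) / 34))).add ((hasDerivAt_pow 36 x).const_mul ((1 : ℝ) / 36)))
        refine h.congr_deriv ?_
        norm_num
        try ring
      rw [MeasureTheory.setIntegral_congr_fun measurableSet_Ioo hpoly1,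
          MeasureTheory.setIntegral_congr_fun measurableSet_Ioo hpoly2,
          ← MeasureTheory.integral_Ioc_eq_integral_Ioo, ← MeasureTheory.integral_Ioc_eq_integral_Ioo,
          ← intervalIntegral.integral_of_le (zero_le_one : (0:ℝ) ≤ 1),
          ← intervalIntegral.integral_of_le (zero_le_one : (0:ℝ) ≤ 1),
          intervalIntegral.integral_eq_sub_of_hasDerivAt hQ1 ((by fun_prop : Continuous (fun r : ℝ => (64 : ℝ) * r ^ 3 + (-3072 : ℝ) * r ^ 5 + (58368 : ℝ) * r ^ 7 + (-587776 : ℝ) * r ^ 9 + (3661056 : ℝ) * r ^ 11 + (-15418368 : ℝ) * r ^ 13 + (46362624 : ℝ) * r ^ 15 + (-102998016 : ℝ) * r ^ 17 + (172605312 : ℝ) * r ^ 19 + (-220582912 : ℝ) * r ^ 21 + (215491584 : ℝ) * r ^ 23 + (-159946752 : ℝ) * r ^ 25 + (88738048 : ℝ) * r ^ 27 + (-35675136 : ℝ) * r ^ 29 + (9824256 : ℝ) * r ^ 31 + (-1658880 : ℝ) * r ^ 33 + (129600 : ℝ) * r ^ 35)).intervalIntegrable 0 1),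
          intervalIntegral.integral_eq_sub_of_hasDerivAt hQ2 ((by fun_prop : Continuous (fun r : ℝ => (1 : ℝ) * r ^ 3 + (-16 : ℝ) * r ^ 5 + (120 : ℝ) * r ^ 7 + (-560 : ℝ) * r ^ 9 + (1820 : ℝ) * r ^ 11 + (-4368 : ℝ) * r ^ 13 + (8008 : ℝ) * r ^ 15 + (-11440 : ℝ) * r ^ 17 + (12870 : ℝ) * r ^ 19 + (-11440 : ℝ) * r ^ 21 + (8008 : ℝ) * r ^ 23 + (-4368 : ℝ) * r ^ 25 + (1820 : ℝ) * r ^ 27 + (-560 : ℝ) * r ^ 29 + (120 : ℝ) * r ^ 31 + (-16 : ℝ) * r ^ 33 + (1 : ℝ) * r ^ 35)).intervalIntegrable 0 1)]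
      norm_num
    · have hpoly1 : Set.EqOn (fun r : ℝ => r ^ (9 - 1) * (deriv (deriv (Vtest 9)) r + (((9:ℕ) : ℝ) - 1) * deriv (Vtest 9) r / r + 2 * (((9:ℕ) : ℝ) - 4) * Vtest 9 r / r ^ 2) ^ 2) (fun r : ℝ => (100 : ℝ) * r ^ 4 + (-5040 : ℝ) * r ^ 6 + (102384 : ℝ) * r ^ 8 + (-1127616 : ℝ) * r ^ 10 + (7832304 : ℝ) * r ^ 12 + (-37449216 : ℝ) * r ^ 14 + (130157664 : ℝ) * r ^ 16 + (-340636608 : ℝ) * r ^ 18 + (686918232 : ℝ) * r ^ 20 + (-1082832608 : ℝ) * r ^ 22 + (1344575232 : ℝ) * r ^ 24 + (-1317446208 : ℝ) * r ^ 26 + (1014350064 : ℝ) * r ^ 28 + (-606969216 : ℝ) * r ^ 30 + (276662304 : ℝ) * r ^ 32 + (-92855616 : ℝ) * r ^ 34 + (21642084 : ℝ) * r ^ 36 + (-3129840 : ℝ) * r ^ 38 + (211600 : ℝ) * r ^ 40) (Set.Ioo 0 1) := by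
        intro r hr
        have hr0 : r ≠ 0 := ne_of_gt hr.1
        simp only [deriv2_Vtest]
        simp only [deriv_Vtest]
        simp only [Vtest]
        norm_num
        field_simp
        ring
      have hpoly2 : Set.EqOn (fun r : ℝ => r ^ (9 - 1) * (Vtest 9 r ^ 2 / r ^ 4)) (fun r : ℝ => (1 : ℝ) * r ^ 4 + (-18 : ℝ) * r ^ 6 + (153 : ℝ) * r ^ 8 + (-816 : ℝ) * r ^ 10 + (3060 : ℝ) * r ^ 12 + (-8568 : ℝ) * r ^ 14 + (18564 : ℝ) * r ^ 16 + (-31824 : ℝ) * r ^ 18 + (43758 : ℝ) * r ^ 20 + (-48620 : ℝ) * r ^ 22 + (43758 : ℝ) * r ^ 24 + (-31824 : ℝ) * r ^ 26 + (18564 : ℝ) * r ^ 28 + (-8568 : ℝ) * r ^ 30 + (3060 : ℝ) * r ^ 32 + (-816 : ℝ) * r ^ 34 + (153 : ℝ) * r ^ 36 + (-18 : ℝ) * r ^ 38 + (1 : ℝ) * r ^ 40) (Set.Ioo 0 1) := by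
        intro r hr
        have hr0 : r ≠ 0 := ne_of_gt hr.1
        simp only [Vtest]
        field_simp
        ring
      have hQ1 : ∀ x ∈ Set.uIcc (0:ℝ) 1, HasDerivAt (fun y : ℝ => (100 : ℝ) / 5 * y ^ 5 + (-5040 : ℝ) / 7 * y ^ 7 + (102384 : ℝ) / 9 * y ^ 9 + (-1127616 : ℝ) / 11 * y ^ 11 + (7832304 : ℝ) / 13 * y ^ 13 + (-37449216 : ℝ) / 15 * y ^ 15 + (130157664 : ℝ) / 17 * y ^ 17 + (-340636608 : ℝ) / 19 * y ^ 19 + (686918232 : ℝ) / 21 * y ^ 21 + (-1082832608 : ℝ) / 23 * y ^ 23 + (1344575232 : ℝ) / 25 * y ^ 25 + (-1317446208 : ℝ) / 27 * y ^ 27 + (1014350064 : ℝ) / 29 * y ^ 29 + (-606969216 : ℝ) / 31 * y ^ 31 + (276662304 : ℝ) / 33 * y ^ 33 + (-92855616 : ℝ) / 35 * y ^ 35 + (21642084 : ℝ) / 37 * y ^ 37 + (-3129840 : ℝ) / 39 * y ^ 39 + (211600 : ℝ) / 41 * y ^ 41) ((100 : ℝ) * x ^ 4 + (-5040 : ℝ)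 * x ^ 6 + (102384 : ℝ) * x ^ 8 + (-1127616 : ℝ) * x ^ 10 + (7832304 : ℝ) * x ^ 12 + (-37449216 : ℝ) * x ^ 14 + (130157664 : ℝ) * x ^ 16 + (-340636608 : ℝ) * x ^ 18 + (686918232 : ℝ) * x ^ 20 + (-1082832608 : ℝ) * x ^ 22 + (1344575232 : ℝ) * x ^ 24 + (-1317446208 : ℝ) * x ^ 26 + (1014350064 : ℝ) * x ^ 28 + (-606969216 : ℝ) * x ^ 30 + (276662304 : ℝ) * x ^ 32 + (-92855616 : ℝ) * x ^ 34 + (21642084 : ℝ) * x ^ 36 + (-3129840 : ℝ) * x ^ 38 + (211600 : ℝ) * x ^ 40) x := by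
        intro x _
        have h := ((((((((((((((((((((hasDerivAt_pow 5 x).const_mul ((100 : ℝ) / 5)).add ((hasDerivAt_pow 7 x).const_mul ((-5040 : ℝ) / 7))).add ((hasDerivAt_pow 9 x).const_mul ((102384 : ℝ) / 9))).add ((hasDerivAt_pow 11 x).const_mul ((-1127616 : ℝ) / 11))).add ((hasDerivAt_pow 13 x).const_mul ((7832304 : ℝ) / 13))).add ((hasDerivAt_pow 15 x).const_mul ((-37449216 : ℝ) / 15))).add ((hasDerivAt_pow 17 x).const_mul ((130157664 : ℝ) / 17))).add ((hasDerivAt_pow 19 x).const_mul ((-340636608 : ℝ) / 19))).add ((hasDerivAt_pow 21 x).const_mul ((686918232 : ℝ) / 21))).add ((hasDerivAt_pow 23 x).const_mul ((-1082832608 : ℝ) / 23))).add ((hasDerivAt_pow 25 x).const_mul ((1344575232 : ℝ) / 25))).add ((hasDerivAt_pow 27 x).const_mul ((-1317446208 : ℝ) / 27))).add ((hasDerivAt_pow 29 x).const_mul ((1014350064 : ℝ) / 29))).add ((hasDerivAt_pow 31 x).const_mul ((-606969216 : ℝ) / 31))).add ((hasDerivAt_pow 33 x).const_mul ((276662304 :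 ℝ) / 33))).add ((hasDerivAt_pow 35 x).const_mul ((-92855616 : ℝ) / 35))).add ((hasDerivAt_pow 37 x).const_mul ((21642084 : ℝ) / 37))).add ((hasDerivAt_pow 39 x).const_mul ((-3129840 : ℝ) / 39))).add ((hasDerivAt_pow 41 x).const_mul ((211600 : ℝ) / 41)))
        refine h.congr_deriv ?_
        norm_num
        try ring
      have hQ2 : ∀ x ∈ Set.uIcc (0:ℝ) 1, HasDerivAt (fun y : ℝ => (1 : ℝ) / 5 * y ^ 5 + (-18 : ℝ) / 7 * y ^ 7 + (153 : ℝ) / 9 * y ^ 9 + (-816 : ℝ) / 11 * y ^ 11 + (3060 : ℝ) / 13 * y ^ 13 + (-8568 : ℝ) / 15 * y ^ 15 + (18564 : ℝ) / 17 * y ^ 17 + (-31824 : ℝ) / 19 * y ^ 19 + (43758 : ℝ) / 21 * y ^ 21 + (-48620 : ℝ) / 23 * y ^ 23 + (43758 : ℝ) / 25 * y ^ 25 + (-31824 : ℝ) / 27 * y ^ 27 + (18564 : ℝ) / 29 * y ^ 29 + (-8568 : ℝ) / 31 * y ^ 31 + (3060 : ℝ) / 33 * y ^ 33 + (-816 :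 ℝ) / 35 * y ^ 35 + (153 : ℝ) / 37 * y ^ 37 + (-18 : ℝ) / 39 * y ^ 39 + (1 : ℝ) / 41 * y ^ 41) ((1 : ℝ) * x ^ 4 + (-18 : ℝ) * x ^ 6 + (153 : ℝ) * x ^ 8 + (-816 : ℝ) * x ^ 10 + (3060 : ℝ) * x ^ 12 + (-8568 : ℝ) * x ^ 14 + (18564 : ℝ) * x ^ 16 + (-31824 : ℝ) * x ^ 18 + (43758 : ℝ) * x ^ 20 + (-48620 : ℝ) * x ^ 22 + (43758 : ℝ) * x ^ 24 + (-31824 : ℝ) * x ^ 26 + (18564 : ℝ) * x ^ 28 + (-8568 : ℝ) * x ^ 30 + (3060 : ℝ) * x ^ 32 + (-816 : ℝ) * x ^ 34 + (153 : ℝ) * x ^ 36 + (-18 : ℝ) * x ^ 38 + (1 : ℝ) * x ^ 40) x := by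
        intro x _
        have h := ((((((((((((((((((((hasDerivAt_pow 5 x).const_mul ((1 : ℝ) / 5)).add ((hasDerivAt_pow 7 x).const_mul ((-18 : ℝ) / 7))).add ((hasDerivAt_pow 9 x).const_mul ((153 : ℝ) / 9))).add ((hasDerivAt_pow 11 x).const_mul ((-816 : ℝ) / 11))).add ((hasDerivAt_pow 13 x).const_mul ((3060 : ℝ) / 13))).add ((hasDerivAt_pow 15 x).const_mul ((-8568 : ℝ) / 15))).add ((hasDerivAt_pow 17 x).const_mul ((18564 : ℝ) / 17))).add ((hasDerivAt_pow 19 x).const_mul ((-31824 : ℝ) / 19))).add ((hasDerivAt_pow 21 x).const_mul ((43758 : ℝ) / 21))).add ((hasDerivAt_pow 23 x).const_mul ((-48620 : ℝ) / 23))).add ((hasDerivAt_pow 25 x).const_mul ((43758 : ℝ) / 25))).add ((hasDerivAt_pow 27 x).const_mul ((-31824 : ℝ) / 27))).add ((hasDerivAt_pow 29 x).const_mul ((18564 : ℝ) / 29))).add ((hasDerivAt_pow 31 x).const_mul ((-8568 : ℝ) / 31))).add ((hasDerivAt_pow 33 x).const_mul ((3060 : ℝ) / 33))).add ((hasDerivAt_pow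 35 x).const_mul ((-816 : ℝ) / 35))).add ((hasDerivAt_pow 37 x).const_mul ((153 : ℝ) / 37))).add ((hasDerivAt_pow 39 x).const_mul ((-18 : ℝ) / 39))).add ((hasDerivAt_pow 41 x).const_mul ((1 : ℝ) / 41)))
        refine h.congr_deriv ?_
        norm_num
        try ring
      rw [MeasureTheory.setIntegral_congr_fun measurableSet_Ioo hpoly1,
          MeasureTheory.setIntegral_congr_fun measurableSet_Ioo hpoly2,
          ← MeasureTheory.integral_Ioc_eq_integral_Ioo, ← MeasureTheory.integral_Ioc_eq_integral_Ioo,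
          ← intervalIntegral.integral_of_le (zero_le_one : (0:ℝ) ≤ 1),
          ← intervalIntegral.integral_of_le (zero_le_one : (0:ℝ) ≤ 1),
          intervalIntegral.integral_eq_sub_of_hasDerivAt hQ1 ((by fun_prop : Continuous (fun r : ℝ => (100 : ℝ) * r ^ 4 + (-5040 : ℝ) * r ^ 6 + (102384 : ℝ) * r ^ 8 + (-1127616 : ℝ) * r ^ 10 + (7832304 : ℝ) * r ^ 12 + (-37449216 : ℝ) * r ^ 14 + (130157664 : ℝ) * r ^ 16 + (-340636608 : ℝ) * r ^ 18 + (686918232 : ℝ) * r ^ 20 + (-1082832608 : ℝ) * r ^ 22 + (1344575232 : ℝ) * r ^ 24 + (-1317446208 : ℝ) * r ^ 26 + (1014350064 : ℝ) * r ^ 28 + (-606969216 : ℝ) * r ^ 30 + (276662304 : ℝ) * r ^ 32 + (-92855616 : ℝ) * r ^ 34 + (21642084 : ℝ) * r ^ 36 + (-3129840 : ℝ) * r ^ 38 + (211600 : ℝ) * r ^ 40)).intervalIntegrable 0 1),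
          intervalIntegral.integral_eq_sub_of_hasDerivAt hQ2 ((by fun_prop : Continuous (fun r : ℝ => (1 : ℝ) * r ^ 4 + (-18 : ℝ) * r ^ 6 + (153 : ℝ) * r ^ 8 + (-816 : ℝ) * r ^ 10 + (3060 : ℝ) * r ^ 12 + (-8568 : ℝ) * r ^ 14 + (18564 : ℝ) * r ^ 16 + (-31824 : ℝ) * r ^ 18 + (43758 : ℝ) * r ^ 20 + (-48620 : ℝ) * r ^ 22 + (43758 : ℝ) * r ^ 24 + (-31824 : ℝ) * r ^ 26 + (18564 : ℝ) * r ^ 28 + (-8568 : ℝ) * r ^ 30 + (3060 : ℝ) * r ^ 32 + (-816 : ℝ) * r ^ 34 + (153 : ℝ) * r ^ 36 + (-18 : ℝ) * r ^ 38 + (1 : ℝ) * r ^ 40)).intervalIntegrable 0 1)]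
      norm_num
    · have hpoly1 : Set.EqOn (fun r : ℝ => r ^ (10 - 1) * (deriv (deriv (Vtest 10)) r + (((10:ℕ) : ℝ) - 1) * deriv (Vtest 10) r / r + 2 * (((10:ℕ) : ℝ) - 4) * Vtest 10 r / r ^ 2) ^ 2) (fun r : ℝ => (144 : ℝ) * r ^ 5 + (-7680 : ℝ) * r ^ 7 + (167200 : ℝ) * r ^ 9 + (-2004480 : ℝ) * r ^ 11 + (15368400 : ℝ) * r ^ 13 + (-82185216 : ℝ) * r ^ 15 + (323706240 : ℝ) * r ^ 17 + (-973440000 : ℝ) * r ^ 19 + (2289899040 : ℝ) * r ^ 21 + (-4283136000 : ℝ) * r ^ 23 + (6436757184 : ℝ) * r ^ 25 + (-7815741440 : ℝ) * r ^ 27 + (7677914400 : ℝ) * r ^ 29 + (-6084080640 : ℝ) * r ^ 31 + (3858748800 : ℝ) * r ^ 33 + (-1931959296 : ℝ) * r ^ 35 + (746732880 : ℝ) * r ^ 37 + (-215001600 : ℝ) * r ^ 39 + (43426080 : ℝ) * r ^ 41 + (-5491200 : ℝ) * r ^ 43 + (327184 : ℝ) * r ^ 45) (Set.Ioo 0 1)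 := by
        intro r hr
        have hr0 : r ≠ 0 := ne_of_gt hr.1
        simp only [deriv2_Vtest]
        simp only [deriv_Vtest]
        simp only [Vtest]
        norm_num
        field_simp
        ring
      have hpoly2 : Set.EqOn (fun r : ℝ => r ^ (10 - 1) * (Vtest 10 r ^ 2 / r ^ 4)) (fun r : ℝ => (1 : ℝ) * r ^ 5 + (-20 : ℝ) * r ^ 7 + (190 : ℝ) * r ^ 9 + (-1140 : ℝ) * r ^ 11 + (4845 : ℝ) * r ^ 13 + (-15504 : ℝ) * r ^ 15 + (38760 : ℝ) * r ^ 17 + (-77520 : ℝ) * r ^ 19 + (125970 : ℝ) * r ^ 21 + (-167960 : ℝ) * r ^ 23 + (184756 : ℝ) * r ^ 25 + (-167960 : ℝ) * r ^ 27 + (125970 : ℝ) * r ^ 29 + (-77520 : ℝ) * r ^ 31 + (38760 : ℝ) * r ^ 33 + (-15504 : ℝ) * r ^ 35 + (4845 : ℝ) * r ^ 37 + (-1140 : ℝ) * r ^ 39 + (190 : ℝ) * r ^ 41 + (-20 : ℝ) * r ^ 43 + (1 : ℝ) * r ^ 45) (Set.Ioo 0 1) := by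
        intro r hr
        have hr0 : r ≠ 0 := ne_of_gt hr.1
        simp only [Vtest]
        field_simp
        ring
      have hQ1 : ∀ x ∈ Set.uIcc (0:ℝ) 1, HasDerivAt (fun y : ℝ => (144 : ℝ) / 6 * y ^ 6 + (-7680 : ℝ) / 8 * y ^ 8 + (167200 : ℝ) / 10 * y ^ 10 + (-2004480 : ℝ) / 12 * y ^ 12 + (15368400 : ℝ) / 14 * y ^ 14 + (-82185216 : ℝ) / 16 * y ^ 16 + (323706240 : ℝ) / 18 * y ^ 18 + (-973440000 : ℝ) / 20 * y ^ 20 + (2289899040 : ℝ) / 22 * y ^ 22 + (-4283136000 : ℝ) / 24 * y ^ 24 + (6436757184 : ℝ) / 26 * y ^ 26 + (-7815741440 : ℝ) / 28 * y ^ 28 + (7677914400 : ℝ) / 30 * y ^ 30 + (-6084080640 : ℝ) / 32 * y ^ 32 + (3858748800 : ℝ) / 34 * y ^ 34 + (-1931959296 : ℝ) / 36 * y ^ 36 + (746732880 : ℝ) / 38 * y ^ 38 + (-215001600 : ℝ) / 40 * y ^ 40 + (43426080 : ℝ) / 42 * y ^ 42 + (-5491200 : ℝ) / 44 * y ^ 44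 + (327184 : ℝ) / 46 * y ^ 46) ((144 : ℝ) * x ^ 5 + (-7680 : ℝ) * x ^ 7 + (167200 : ℝ) * x ^ 9 + (-2004480 : ℝ) * x ^ 11 + (15368400 : ℝ) * x ^ 13 + (-82185216 : ℝ) * x ^ 15 + (323706240 : ℝ) * x ^ 17 + (-973440000 : ℝ) * x ^ 19 + (2289899040 : ℝ) * x ^ 21 + (-4283136000 : ℝ) * x ^ 23 + (6436757184 : ℝ) * x ^ 25 + (-7815741440 : ℝ) * x ^ 27 + (7677914400 : ℝ) * x ^ 29 + (-6084080640 : ℝ) * x ^ 31 + (3858748800 : ℝ) * x ^ 33 + (-1931959296 : ℝ) * x ^ 35 + (746732880 : ℝ) * x ^ 37 + (-215001600 : ℝ) * x ^ 39 + (43426080 : ℝ) * x ^ 41 + (-5491200 : ℝ) * x ^ 43 + (327184 : ℝ) * x ^ 45) x := by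
        intro x _
        have h := ((((((((((((((((((((((hasDerivAt_pow 6 x).const_mul ((144 : ℝ) / 6)).add ((hasDerivAt_pow 8 x).const_mul ((-7680 : ℝ) / 8))).add ((hasDerivAt_pow 10 x).const_mul ((167200 : ℝ) / 10))).add ((hasDerivAt_pow 12 x).const_mul ((-2004480 : ℝ) / 12))).add ((hasDerivAt_pow 14 x).const_mul ((15368400 : ℝ) / 14))).add ((hasDerivAt_pow 16 x).const_mul ((-82185216 : ℝ) / 16))).add ((hasDerivAt_pow 18 x).const_mul ((323706240 : ℝ) / 18))).add ((hasDerivAt_pow 20 x).const_mul ((-973440000 : ℝ) / 20))).add ((hasDerivAt_pow 22 x).const_mul ((2289899040 : ℝ) / 22))).add ((hasDerivAt_pow 24 x).const_mul ((-4283136000 : ℝ) / 24))).add ((hasDerivAt_pow 26 x).const_mul ((6436757184 : ℝ) / 26))).add ((hasDerivAt_pow 28 x).const_mul ((-7815741440 : ℝ) / 28))).add ((hasDerivAt_pow 30 x).const_mul ((7677914400 : ℝ) / 30))).add ((hasDerivAt_pow 32 x).const_mul ((-6084080640 : ℝ) / 32))).add ((hasDerivAt_pow 34 x).const_mul ((3858748800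 : ℝ) / 34))).add ((hasDerivAt_pow 36 x).const_mul ((-1931959296 : ℝ) / 36))).add ((hasDerivAt_pow 38 x).const_mul ((746732880 : ℝ) / 38))).add ((hasDerivAt_pow 40 x).const_mul ((-215001600 : ℝ) / 40))).add ((hasDerivAt_pow 42 x).const_mul ((43426080 : ℝ) / 42))).add ((hasDerivAt_pow 44 x).const_mul ((-5491200 : ℝ) / 44))).add ((hasDerivAt_pow 46 x).const_mul ((327184 : ℝ) / 46)))
        refine h.congr_deriv ?_
        norm_num
        try ring
      have hQ2 : ∀ x ∈ Set.uIcc (0:ℝ) 1, HasDerivAt (fun y : ℝ => (1 : ℝ) / 6 * y ^ 6 + (-20 : ℝ) / 8 * y ^ 8 + (190 : ℝ) / 10 * y ^ 10 + (-1140 : ℝ) / 12 * y ^ 12 + (4845 : ℝ) / 14 * y ^ 14 + (-15504 : ℝ) / 16 * y ^ 16 + (38760 : ℝ) / 18 * y ^ 18 + (-77520 : ℝ) / 20 * y ^ 20 + (125970 : ℝ) / 22 * y ^ 22 + (-167960 : ℝ) / 24 * y ^ 24 + (184756 : ℝ) / 26 * y ^ 26 + (-167960 : ℝ) / 28 * y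 ^ 28 + (125970 : ℝ) / 30 * y ^ 30 + (-77520 : ℝ) / 32 * y ^ 32 + (38760 : ℝ) / 34 * y ^ 34 + (-15504 : ℝ) / 36 * y ^ 36 + (4845 : ℝ) / 38 * y ^ 38 + (-1140 : ℝ) / 40 * y ^ 40 + (190 : ℝ) / 42 * y ^ 42 + (-20 : ℝ) / 44 * y ^ 44 + (1 : ℝ) / 46 * y ^ 46) ((1 : ℝ) * x ^ 5 + (-20 : ℝ) * x ^ 7 + (190 : ℝ) * x ^ 9 + (-1140 : ℝ) * x ^ 11 + (4845 : ℝ) * x ^ 13 + (-15504 : ℝ) * x ^ 15 + (38760 : ℝ) * x ^ 17 + (-77520 : ℝ) * x ^ 19 + (125970 : ℝ) * x ^ 21 + (-167960 : ℝ) * x ^ 23 + (184756 : ℝ) * x ^ 25 + (-167960 : ℝ) * x ^ 27 + (125970 : ℝ) * x ^ 29 + (-77520 : ℝ) * x ^ 31 + (38760 : ℝ) * x ^ 33 + (-15504 : ℝ) * x ^ 35 + (4845 : ℝ) * x ^ 37 + (-1140 : ℝ) * x ^ 39 + (190 : ℝ) * x ^ 41 + (-20 : ℝ) * x ^ 43 +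 (1 : ℝ) * x ^ 45) x := by
        intro x _
        have h := ((((((((((((((((((((((hasDerivAt_pow 6 x).const_mul ((1 : ℝ) / 6)).add ((hasDerivAt_pow 8 x).const_mul ((-20 : ℝ) / 8))).add ((hasDerivAt_pow 10 x).const_mul ((190 : ℝ) / 10))).add ((hasDerivAt_pow 12 x).const_mul ((-1140 : ℝ) / 12))).add ((hasDerivAt_pow 14 x).const_mul ((4845 : ℝ) / 14))).add ((hasDerivAt_pow 16 x).const_mul ((-15504 : ℝ) / 16))).add ((hasDerivAt_pow 18 x).const_mul ((38760 : ℝ) / 18))).add ((hasDerivAt_pow 20 x).const_mul ((-77520 : ℝ) / 20))).add ((hasDerivAt_pow 22 x).const_mul ((125970 : ℝ) / 22))).add ((hasDerivAt_pow 24 x).const_mul ((-167960 : ℝ) / 24))).add ((hasDerivAt_pow 26 x).const_mul ((184756 : ℝ) / 26))).add ((hasDerivAt_pow 28 x).const_mul ((-167960 : ℝ) / 28))).add ((hasDerivAt_pow 30 x).const_mul ((125970 : ℝ) / 30))).add ((hasDerivAt_pow 32 x).const_mul ((-77520 : ℝ) / 32))).add ((hasDerivAt_pow 34 x).const_mul ((38760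 : ℝ) / 34))).add ((hasDerivAt_pow 36 x).const_mul ((-15504 : ℝ) / 36))).add ((hasDerivAt_pow 38 x).const_mul ((4845 : ℝ) / 38))).add ((hasDerivAt_pow 40 x).const_mul ((-1140 : ℝ) / 40))).add ((hasDerivAt_pow 42 x).const_mul ((190 : ℝ) / 42))).add ((hasDerivAt_pow 44 x).const_mul ((-20 : ℝ) / 44))).add ((hasDerivAt_pow 46 x).const_mul ((1 : ℝ) / 46)))
        refine h.congr_deriv ?_
        norm_num
        try ring
      rw [MeasureTheory.setIntegral_congr_fun measurableSet_Ioo hpoly1,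
          MeasureTheory.setIntegral_congr_fun measurableSet_Ioo hpoly2,
          ← MeasureTheory.integral_Ioc_eq_integral_Ioo, ← MeasureTheory.integral_Ioc_eq_integral_Ioo,
          ← intervalIntegral.integral_of_le (zero_le_one : (0:ℝ) ≤ 1),
          ← intervalIntegral.integral_of_le (zero_le_one : (0:ℝ) ≤ 1),
          intervalIntegral.integral_eq_sub_of_hasDerivAt hQ1 ((by fun_prop : Continuous (fun r : ℝ => (144 : ℝ) * r ^ 5 + (-7680 : ℝ) * r ^ 7 + (167200 : ℝ) * r ^ 9 + (-2004480 : ℝ) * r ^ 11 + (15368400 : ℝ) * r ^ 13 + (-82185216 : ℝ) * r ^ 15 + (323706240 : ℝ) * r ^ 17 + (-973440000 : ℝ) * r ^ 19 + (2289899040 : ℝ) * r ^ 21 + (-4283136000 : ℝ) * r ^ 23 + (6436757184 : ℝ) * r ^ 25 + (-7815741440 : ℝ) * r ^ 27 + (7677914400 : ℝ) * r ^ 29 + (-6084080640 : ℝ) * r ^ 31 + (3858748800 : ℝ) * r ^ 33 + (-1931959296 : ℝ) * r ^ 35 + (746732880 : ℝ) * r ^ 37 + (-215001600 : ℝ) *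 r ^ 39 + (43426080 : ℝ) * r ^ 41 + (-5491200 : ℝ) * r ^ 43 + (327184 : ℝ) * r ^ 45)).intervalIntegrable 0 1),
          intervalIntegral.integral_eq_sub_of_hasDerivAt hQ2 ((by fun_prop : Continuous (fun r : ℝ => (1 : ℝ) * r ^ 5 + (-20 : ℝ) * r ^ 7 + (190 : ℝ) * r ^ 9 + (-1140 : ℝ) * r ^ 11 + (4845 : ℝ) * r ^ 13 + (-15504 : ℝ) * r ^ 15 + (38760 : ℝ) * r ^ 17 + (-77520 : ℝ) * r ^ 19 + (125970 : ℝ) * r ^ 21 + (-167960 : ℝ) * r ^ 23 + (184756 : ℝ) * r ^ 25 + (-167960 : ℝ) * r ^ 27 + (125970 : ℝ) * r ^ 29 + (-77520 : ℝ) * r ^ 31 + (38760 : ℝ) * r ^ 33 + (-15504 : ℝ) * r ^ 35 + (4845 : ℝ) * r ^ 37 + (-1140 : ℝ) * r ^ 39 + (190 : ℝ) * r ^ 41 + (-20 : ℝ) * r ^ 43 + (1 : ℝ) * r ^ 45)).intervalIntegrable 0 1)]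
      norm_num
    · have hpoly1 : Set.EqOn (fun r : ℝ => r ^ (11 - 1) * (deriv (deriv (Vtest 11)) r + (((11:ℕ) : ℝ) - 1) * deriv (Vtest 11) r / r + 2 * (((11:ℕ) : ℝ) - 4) * Vtest 11 r / r ^ 2) ^ 2) (fun r : ℝ => (196 : ℝ) * r ^ 6 + (-11088 : ℝ) * r ^ 8 + (258456 : ℝ) * r ^ 10 + (-3355440 : ℝ) * r ^ 12 + (28153620 : ℝ) * r ^ 14 + (-166424544 : ℝ) * r ^ 16 + (731920992 : ℝ) * r ^ 18 + (-2483515584 : ℝ) * r ^ 20 + (6666766920 : ℝ) * r ^ 22 + (-14408065760 : ℝ) * r ^ 24 + (25372288656 : ℝ) * r ^ 26 + (-36691014048 : ℝ) * r ^ 28 + (43757358216 : ℝ) * r ^ 30 + (-43080491520 : ℝ) * r ^ 32 + (34938272160 : ℝ) * r ^ 34 + (-23208022464 : ℝ) * r ^ 36 + (12501801972 : ℝ) * r ^ 38 + (-5377095504 : ℝ) * r ^ 40 + (1803270040 : ℝ) * r ^ 42 + (-454457520 : ℝ) * r ^ 44 + (80973156 : ℝ) * r ^ 46 + (-9095328 :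 ℝ) * r ^ 48 + (484416 : ℝ) * r ^ 50) (Set.Ioo 0 1) := by
        intro r hr
        have hr0 : r ≠ 0 := ne_of_gt hr.1
        simp only [deriv2_Vtest]
        simp only [deriv_Vtest]
        simp only [Vtest]
        norm_num
        field_simp
        ring
      have hpoly2 : Set.EqOn (fun r : ℝ => r ^ (11 - 1) * (Vtest 11 r ^ 2 / r ^ 4)) (fun r : ℝ => (1 : ℝ) * r ^ 6 + (-22 : ℝ) * r ^ 8 + (231 : ℝ) * r ^ 10 + (-1540 : ℝ) * r ^ 12 + (7315 : ℝ) * r ^ 14 + (-26334 : ℝ) * r ^ 16 + (74613 : ℝ) * r ^ 18 + (-170544 : ℝ) * r ^ 20 + (319770 : ℝ) * r ^ 22 + (-497420 : ℝ) * r ^ 24 + (646646 : ℝ) * r ^ 26 + (-705432 : ℝ) * r ^ 28 + (646646 : ℝ) * r ^ 30 + (-497420 : ℝ) * r ^ 32 + (319770 : ℝ) * r ^ 34 + (-170544 : ℝ) * r ^ 36 + (74613 : ℝ) * r ^ 38 + (-26334 : ℝ) * r ^ 40 + (7315 : ℝ) * r ^ 42 + (-1540 : ℝ) * r ^ 44 +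 (231 : ℝ) * r ^ 46 + (-22 : ℝ) * r ^ 48 + (1 : ℝ) * r ^ 50) (Set.Ioo 0 1) := by
        intro r hr
        have hr0 : r ≠ 0 := ne_of_gt hr.1
        simp only [Vtest]
        field_simp
        ring
      have hQ1 : ∀ x ∈ Set.uIcc (0:ℝ) 1, HasDerivAt (fun y : ℝ => (196 : ℝ) / 7 * y ^ 7 + (-11088 : ℝ) / 9 * y ^ 9 + (258456 : ℝ) / 11 * y ^ 11 + (-3355440 : ℝ) / 13 * y ^ 13 + (28153620 : ℝ) / 15 * y ^ 15 + (-166424544 : ℝ) / 17 * y ^ 17 + (731920992 : ℝ) / 19 * y ^ 19 + (-2483515584 : ℝ) / 21 * y ^ 21 + (6666766920 : ℝ) / 23 * y ^ 23 + (-14408065760 : ℝ) / 25 * y ^ 25 + (25372288656 : ℝ) / 27 * y ^ 27 + (-36691014048 : ℝ) / 29 * y ^ 29 + (43757358216 : ℝ) / 31 * y ^ 31 + (-43080491520 : ℝ) / 33 * y ^ 33 + (34938272160 : ℝ) / 35 * y ^ 35 + (-23208022464 : ℝ) / 37 * y ^ 37 + (12501801972 : ℝ) / 39 * y ^ 39 +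 (-5377095504 : ℝ) / 41 * y ^ 41 + (1803270040 : ℝ) / 43 * y ^ 43 + (-454457520 : ℝ) / 45 * y ^ 45 + (80973156 : ℝ) / 47 * y ^ 47 + (-9095328 : ℝ) / 49 * y ^ 49 + (484416 : ℝ) / 51 * y ^ 51) ((196 : ℝ) * x ^ 6 + (-11088 : ℝ) * x ^ 8 + (258456 : ℝ) * x ^ 10 + (-3355440 : ℝ) * x ^ 12 + (28153620 : ℝ) * x ^ 14 + (-166424544 : ℝ) * x ^ 16 + (731920992 : ℝ) * x ^ 18 + (-2483515584 : ℝ) * x ^ 20 + (6666766920 : ℝ) * x ^ 22 + (-14408065760 : ℝ) * x ^ 24 + (25372288656 : ℝ) * x ^ 26 + (-36691014048 : ℝ) * x ^ 28 + (43757358216 : ℝ) * x ^ 30 + (-43080491520 : ℝ) * x ^ 32 + (34938272160 : ℝ) * x ^ 34 + (-23208022464 : ℝ) * x ^ 36 + (12501801972 : ℝ) * x ^ 38 + (-5377095504 : ℝ) * x ^ 40 + (1803270040 : ℝ) * x ^ 42 + (-454457520 : ℝ) * x ^ 44 + (80973156 : ℝ) * x ^ 46 + (-9095328 : ℝ) *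 x ^ 48 + (484416 : ℝ) * x ^ 50) x := by
        intro x _
        have h := ((((((((((((((((((((((((hasDerivAt_pow 7 x).const_mul ((196 : ℝ) / 7)).add ((hasDerivAt_pow 9 x).const_mul ((-11088 : ℝ) / 9))).add ((hasDerivAt_pow 11 x).const_mul ((258456 : ℝ) / 11))).add ((hasDerivAt_pow 13 x).const_mul ((-3355440 : ℝ) / 13))).add ((hasDerivAt_pow 15 x).const_mul ((28153620 : ℝ) / 15))).add ((hasDerivAt_pow 17 x).const_mul ((-166424544 : ℝ) / 17))).add ((hasDerivAt_pow 19 x).const_mul ((731920992 : ℝ) / 19))).add ((hasDerivAt_pow 21 x).const_mul ((-2483515584 : ℝ) / 21))).add ((hasDerivAt_pow 23 x).const_mul ((6666766920 : ℝ) / 23))).add ((hasDerivAt_pow 25 x).const_mul ((-14408065760 : ℝ) / 25))).add ((hasDerivAt_pow 27 x).const_mul ((25372288656 : ℝ) / 27))).add ((hasDerivAt_pow 29 x).const_mul ((-36691014048 : ℝ) / 29))).add ((hasDerivAt_pow 31 x).const_mul ((43757358216 : ℝ) / 31))).add ((hasDerivAt_pow 33 x).const_mul ((-43080491520 : ℝ)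 / 33))).add ((hasDerivAt_pow 35 x).const_mul ((34938272160 : ℝ) / 35))).add ((hasDerivAt_pow 37 x).const_mul ((-23208022464 : ℝ) / 37))).add ((hasDerivAt_pow 39 x).const_mul ((12501801972 : ℝ) / 39))).add ((hasDerivAt_pow 41 x).const_mul ((-5377095504 : ℝ) / 41))).add ((hasDerivAt_pow 43 x).const_mul ((1803270040 : ℝ) / 43))).add ((hasDerivAt_pow 45 x).const_mul ((-454457520 : ℝ) / 45))).add ((hasDerivAt_pow 47 x).const_mul ((80973156 : ℝ) / 47))).add ((hasDerivAt_pow 49 x).const_mul ((-9095328 : ℝ) / 49))).add ((hasDerivAt_pow 51 x).const_mul ((484416 : ℝ) / 51)))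
        refine h.congr_deriv ?_
        norm_num
        try ring
      have hQ2 : ∀ x ∈ Set.uIcc (0:ℝ) 1, HasDerivAt (fun y : ℝ => (1 : ℝ) / 7 * y ^ 7 + (-22 : ℝ) / 9 * y ^ 9 + (231 : ℝ) / 11 * y ^ 11 + (-1540 : ℝ) / 13 * y ^ 13 + (7315 : ℝ) / 15 * y ^ 15 + (-26334 : ℝ) / 17 * y ^ 17 + (74613 : ℝ) / 19 * y ^ 19 + (-170544 : ℝ) / 21 * y ^ 21 + (319770 : ℝ) / 23 * y ^ 23 + (-497420 : ℝ) / 25 * y ^ 25 + (646646 : ℝ) / 27 * y ^ 27 + (-705432 : ℝ) / 29 * y ^ 29 + (646646 : ℝ) / 31 * y ^ 31 + (-497420 : ℝ) / 33 * y ^ 33 + (319770 : ℝ) / 35 * y ^ 35 + (-170544 : ℝ) / 37 * y ^ 37 + (74613 : ℝ) / 39 * y ^ 39 + (-26334 : ℝ) / 41 * y ^ 41 + (7315 : ℝ) / 43 * y ^ 43 + (-1540 : ℝ) / 45 * y ^ 45 + (231 : ℝ) / 47 * y ^ 47 + (-22 : ℝ) / 49 * y ^ 49 + (1 : ℝ)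 / 51 * y ^ 51) ((1 : ℝ) * x ^ 6 + (-22 : ℝ) * x ^ 8 + (231 : ℝ) * x ^ 10 + (-1540 : ℝ) * x ^ 12 + (7315 : ℝ) * x ^ 14 + (-26334 : ℝ) * x ^ 16 + (74613 : ℝ) * x ^ 18 + (-170544 : ℝ) * x ^ 20 + (319770 : ℝ) * x ^ 22 + (-497420 : ℝ) * x ^ 24 + (646646 : ℝ) * x ^ 26 + (-705432 : ℝ) * x ^ 28 + (646646 : ℝ) * x ^ 30 + (-497420 : ℝ) * x ^ 32 + (319770 : ℝ) * x ^ 34 + (-170544 : ℝ) * x ^ 36 + (74613 : ℝ) * x ^ 38 + (-26334 : ℝ) * x ^ 40 + (7315 : ℝ) * x ^ 42 + (-1540 : ℝ) * x ^ 44 + (231 : ℝ) * x ^ 46 + (-22 : ℝ) * x ^ 48 + (1 : ℝ) * x ^ 50) x := by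
        intro x _
        have h := ((((((((((((((((((((((((hasDerivAt_pow 7 x).const_mul ((1 : ℝ) / 7)).add ((hasDerivAt_pow 9 x).const_mul ((-22 : ℝ) / 9))).add ((hasDerivAt_pow 11 x).const_mul ((231 : ℝ) / 11))).add ((hasDerivAt_pow 13 x).const_mul ((-1540 : ℝ) / 13))).add ((hasDerivAt_pow 15 x).const_mul ((7315 : ℝ) / 15))).add ((hasDerivAt_pow 17 x).const_mul ((-26334 : ℝ) / 17))).add ((hasDerivAt_pow 19 x).const_mul ((74613 : ℝ) / 19))).add ((hasDerivAt_pow 21 x).const_mul ((-170544 : ℝ) / 21))).add ((hasDerivAt_pow 23 x).const_mul ((319770 : ℝ) / 23))).add ((hasDerivAt_pow 25 x).const_mul ((-497420 : ℝ) / 25))).add ((hasDerivAt_pow 27 x).const_mul ((646646 : ℝ) / 27))).add ((hasDerivAt_pow 29 x).const_mul ((-705432 : ℝ) / 29))).add ((hasDerivAt_pow 31 x).const_mul ((646646 : ℝ) / 31))).add ((hasDerivAt_pow 33 x).const_mul ((-497420 : ℝ) / 33))).add ((hasDerivAt_pow 35 x).const_mul ((319770 : ℝ) / 35))).add ((hasDerivAt_pow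 37 x).const_mul ((-170544 : ℝ) / 37))).add ((hasDerivAt_pow 39 x).const_mul ((74613 : ℝ) / 39))).add ((hasDerivAt_pow 41 x).const_mul ((-26334 : ℝ) / 41))).add ((hasDerivAt_pow 43 x).const_mul ((7315 : ℝ) / 43))).add ((hasDerivAt_pow 45 x).const_mul ((-1540 : ℝ) / 45))).add ((hasDerivAt_pow 47 x).const_mul ((231 : ℝ) / 47))).add ((hasDerivAt_pow 49 x).const_mul ((-22 : ℝ) / 49))).add ((hasDerivAt_pow 51 x).const_mul ((1 : ℝ) / 51)))
        refine h.congr_deriv ?_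
        norm_num
        try ring
      rw [MeasureTheory.setIntegral_congr_fun measurableSet_Ioo hpoly1,
          MeasureTheory.setIntegral_congr_fun measurableSet_Ioo hpoly2,
          ← MeasureTheory.integral_Ioc_eq_integral_Ioo, ← MeasureTheory.integral_Ioc_eq_integral_Ioo,
          ← intervalIntegral.integral_of_le (zero_le_one : (0:ℝ) ≤ 1),
          ← intervalIntegral.integral_of_le (zero_le_one : (0:ℝ) ≤ 1),
          intervalIntegral.integral_eq_sub_of_hasDerivAt hQ1 ((by fun_prop : Continuous (fun r : ℝ => (196 : ℝ) * r ^ 6 + (-11088 : ℝ) * r ^ 8 + (258456 : ℝ) * r ^ 10 + (-3355440 : ℝ) * r ^ 12 + (28153620 : ℝ) * r ^ 14 + (-166424544 : ℝ) * r ^ 16 + (731920992 : ℝ) * r ^ 18 + (-2483515584 : ℝ) * r ^ 20 + (6666766920 : ℝ) * r ^ 22 + (-14408065760 : ℝ) * r ^ 24 + (25372288656 : ℝ) * r ^ 26 + (-36691014048 : ℝ) * r ^ 28 + (43757358216 : ℝ) * r ^ 30 + (-43080491520 : ℝ) * r ^ 32 + (34938272160 : ℝ) * r ^ 34 + (-23208022464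 : ℝ) * r ^ 36 + (12501801972 : ℝ) * r ^ 38 + (-5377095504 : ℝ) * r ^ 40 + (1803270040 : ℝ) * r ^ 42 + (-454457520 : ℝ) * r ^ 44 + (80973156 : ℝ) * r ^ 46 + (-9095328 : ℝ) * r ^ 48 + (484416 : ℝ) * r ^ 50)).intervalIntegrable 0 1),
          intervalIntegral.integral_eq_sub_of_hasDerivAt hQ2 ((by fun_prop : Continuous (fun r : ℝ => (1 : ℝ) * r ^ 6 + (-22 : ℝ) * r ^ 8 + (231 : ℝ) * r ^ 10 + (-1540 : ℝ) * r ^ 12 + (7315 : ℝ) * r ^ 14 + (-26334 : ℝ) * r ^ 16 + (74613 : ℝ) * r ^ 18 + (-170544 : ℝ) * r ^ 20 + (319770 : ℝ) * r ^ 22 + (-497420 : ℝ) * r ^ 24 + (646646 : ℝ) * r ^ 26 + (-705432 : ℝ) * r ^ 28 + (646646 : ℝ) * r ^ 30 + (-497420 : ℝ) * r ^ 32 + (319770 : ℝ) * r ^ 34 + (-170544 : ℝ) * r ^ 36 + (74613 : ℝ) * r ^ 38 + (-26334 : ℝ) * r ^ 40 + (7315 : ℝ) * r ^ 42 + (-1540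 : ℝ) * r ^ 44 + (231 : ℝ) * r ^ 46 + (-22 : ℝ) * r ^ 48 + (1 : ℝ) * r ^ 50)).intervalIntegrable 0 1)]
      norm_num
    · have hpoly1 : Set.EqOn (fun r : ℝ => r ^ (12 - 1) * (deriv (deriv (Vtest 12)) r + (((12:ℕ) : ℝ) - 1) * deriv (Vtest 12) r / r + 2 * (((12:ℕ) : ℝ) - 4) * Vtest 12 r / r ^ 2) ^ 2) (fun r : ℝ => (256 : ℝ) * r ^ 7 + (-15360 : ℝ) * r ^ 9 + (382464 : ℝ) * r ^ 11 + (-5350400 : ℝ) * r ^ 13 + (48770304 : ℝ) * r ^ 15 + (-315684864 : ℝ) * r ^ 17 + (1532354560 : ℝ) * r ^ 19 + (-5786136576 : ℝ) * r ^ 21 + (17436418560 : ℝ) * r ^ 23 + (-42706036736 : ℝ) * r ^ 25 + (86128813056 : ℝ) * r ^ 27 + (-144343480320 : ℝ) * r ^ 29 + (202224914944 : ℝ) * r ^ 31 + (-237625466880 : ℝ) * r ^ 33 + (234384758784 : ℝ) * r ^ 35 + (-193745260544 : ℝ) * r ^ 37 + (133638278400 : ℝ) * r ^ 39 + (-76350422016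 : ℝ) * r ^ 41 + (35723015680 : ℝ) * r ^ 43 + (-13461144576 : ℝ) * r ^ 45 + (3985572096 : ℝ) * r ^ 47 + (-892897280 : ℝ) * r ^ 49 + (142301184 : ℝ) * r ^ 51 + (-14376960 : ℝ) * r ^ 53 + (692224 : ℝ) * r ^ 55) (Set.Ioo 0 1) := by
        intro r hr
        have hr0 : r ≠ 0 := ne_of_gt hr.1
        simp only [deriv2_Vtest]
        simp only [deriv_Vtest]
        simp only [Vtest]
        norm_num
        field_simp
        ring
      have hpoly2 : Set.EqOn (fun r : ℝ => r ^ (12 - 1) * (Vtest 12 r ^ 2 / r ^ 4)) (fun r : ℝ => (1 : ℝ) * r ^ 7 + (-24 : ℝ) * r ^ 9 + (276 : ℝ) * r ^ 11 + (-2024 : ℝ) * r ^ 13 + (10626 : ℝ) * r ^ 15 + (-42504 : ℝ) * r ^ 17 + (134596 : ℝ) * r ^ 19 + (-346104 : ℝ) * r ^ 21 + (735471 : ℝ) * r ^ 23 + (-1307504 : ℝ) * r ^ 25 + (1961256 : ℝ) * r ^ 27 + (-2496144 : ℝ) * r ^ 29 + (2704156 : ℝ) * r ^ 31 + (-2496144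 : ℝ) * r ^ 33 + (1961256 : ℝ) * r ^ 35 + (-1307504 : ℝ) * r ^ 37 + (735471 : ℝ) * r ^ 39 + (-346104 : ℝ) * r ^ 41 + (134596 : ℝ) * r ^ 43 + (-42504 : ℝ) * r ^ 45 + (10626 : ℝ) * r ^ 47 + (-2024 : ℝ) * r ^ 49 + (276 : ℝ) * r ^ 51 + (-24 : ℝ) * r ^ 53 + (1 : ℝ) * r ^ 55) (Set.Ioo 0 1) := by
        intro r hr
        have hr0 : r ≠ 0 := ne_of_gt hr.1
        simp only [Vtest]
        field_simp
        ring
      have hQ1 : ∀ x ∈ Set.uIcc (0:ℝ) 1, HasDerivAt (fun y : ℝ => (256 : ℝ) / 8 * y ^ 8 + (-15360 : ℝ) / 10 * y ^ 10 + (382464 : ℝ) / 12 * y ^ 12 + (-5350400 : ℝ) / 14 * y ^ 14 + (48770304 : ℝ) / 16 * y ^ 16 + (-315684864 : ℝ) / 18 * y ^ 18 + (1532354560 : ℝ) / 20 * y ^ 20 + (-5786136576 : ℝ) / 22 * y ^ 22 + (17436418560 : ℝ) / 24 * y ^ 24 + (-42706036736 : ℝ) / 26 * y ^ 26 + (86128813056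 : ℝ) / 28 * y ^ 28 + (-144343480320 : ℝ) / 30 * y ^ 30 + (202224914944 : ℝ) / 32 * y ^ 32 + (-237625466880 : ℝ) / 34 * y ^ 34 + (234384758784 : ℝ) / 36 * y ^ 36 + (-193745260544 : ℝ) / 38 * y ^ 38 + (133638278400 : ℝ) / 40 * y ^ 40 + (-76350422016 : ℝ) / 42 * y ^ 42 + (35723015680 : ℝ) / 44 * y ^ 44 + (-13461144576 : ℝ) / 46 * y ^ 46 + (3985572096 : ℝ) / 48 * y ^ 48 + (-892897280 : ℝ) / 50 * y ^ 50 + (142301184 : ℝ) / 52 * y ^ 52 + (-14376960 : ℝ) / 54 * y ^ 54 + (692224 : ℝ) / 56 * y ^ 56) ((256 : ℝ) * x ^ 7 + (-15360 : ℝ) * x ^ 9 + (382464 : ℝ) * x ^ 11 + (-5350400 : ℝ) * x ^ 13 + (48770304 : ℝ) * x ^ 15 + (-315684864 : ℝ) * x ^ 17 + (1532354560 : ℝ) * x ^ 19 + (-5786136576 : ℝ) * x ^ 21 + (17436418560 : ℝ) * x ^ 23 + (-42706036736 : ℝ) * x ^ 25 + (86128813056 : ℝ) * x ^ 27 + (-144343480320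 : ℝ) * x ^ 29 + (202224914944 : ℝ) * x ^ 31 + (-237625466880 : ℝ) * x ^ 33 + (234384758784 : ℝ) * x ^ 35 + (-193745260544 : ℝ) * x ^ 37 + (133638278400 : ℝ) * x ^ 39 + (-76350422016 : ℝ) * x ^ 41 + (35723015680 : ℝ) * x ^ 43 + (-13461144576 : ℝ) * x ^ 45 + (3985572096 : ℝ) * x ^ 47 + (-892897280 : ℝ) * x ^ 49 + (142301184 : ℝ) * x ^ 51 + (-14376960 : ℝ) * x ^ 53 + (692224 : ℝ) * x ^ 55) x := by
        intro x _
        have h := ((((((((((((((((((((((((((hasDerivAt_pow 8 x).const_mul ((256 : ℝ) / 8)).add ((hasDerivAt_pow 10 x).const_mul ((-15360 : ℝ) / 10))).add ((hasDerivAt_pow 12 x).const_mul ((382464 : ℝ) / 12))).add ((hasDerivAt_pow 14 x).const_mul ((-5350400 : ℝ) / 14))).add ((hasDerivAt_pow 16 x).const_mul ((48770304 : ℝ) / 16))).add ((hasDerivAt_pow 18 x).const_mul ((-315684864 : ℝ) / 18))).add ((hasDerivAt_pow 20 x).const_mul ((1532354560 : ℝ) / 20))).add ((hasDerivAt_pow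 22 x).const_mul ((-5786136576 : ℝ) / 22))).add ((hasDerivAt_pow 24 x).const_mul ((17436418560 : ℝ) / 24))).add ((hasDerivAt_pow 26 x).const_mul ((-42706036736 : ℝ) / 26))).add ((hasDerivAt_pow 28 x).const_mul ((86128813056 : ℝ) / 28))).add ((hasDerivAt_pow 30 x).const_mul ((-144343480320 : ℝ) / 30))).add ((hasDerivAt_pow 32 x).const_mul ((202224914944 : ℝ) / 32))).add ((hasDerivAt_pow 34 x).const_mul ((-237625466880 : ℝ) / 34))).add ((hasDerivAt_pow 36 x).const_mul ((234384758784 : ℝ) / 36))).add ((hasDerivAt_pow 38 x).const_mul ((-193745260544 : ℝ) / 38))).add ((hasDerivAt_pow 40 x).const_mul ((133638278400 : ℝ) / 40))).add ((hasDerivAt_pow 42 x).const_mul ((-76350422016 : ℝ) / 42))).add ((hasDerivAt_pow 44 x).const_mul ((35723015680 : ℝ) / 44))).add ((hasDerivAt_pow 46 x).const_mul ((-13461144576 : ℝ) / 46))).add ((hasDerivAt_pow 48 x).const_mul ((3985572096 : ℝ) / 48))).add ((hasDerivAt_pow 50 x).const_mul ((-892897280 : ℝ) / 50))).add ((hasDerivAt_pow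 52 x).const_mul ((142301184 : ℝ) / 52))).add ((hasDerivAt_pow 54 x).const_mul ((-14376960 : ℝ) / 54))).add ((hasDerivAt_pow 56 x).const_mul ((692224 : ℝ) / 56)))
        refine h.congr_deriv ?_
        norm_num
        try ring
      have hQ2 : ∀ x ∈ Set.uIcc (0:ℝ) 1, HasDerivAt (fun y : ℝ => (1 : ℝ) / 8 * y ^ 8 + (-24 : ℝ) / 10 * y ^ 10 + (276 : ℝ) / 12 * y ^ 12 + (-2024 : ℝ) / 14 * y ^ 14 + (10626 : ℝ) / 16 * y ^ 16 + (-42504 : ℝ) / 18 * y ^ 18 + (134596 : ℝ) / 20 * y ^ 20 + (-346104 : ℝ) / 22 * y ^ 22 + (735471 : ℝ) / 24 * y ^ 24 + (-1307504 : ℝ) / 26 * y ^ 26 + (1961256 : ℝ) / 28 * y ^ 28 + (-2496144 : ℝ) / 30 * y ^ 30 + (2704156 : ℝ) / 32 * y ^ 32 + (-2496144 : ℝ) / 34 * y ^ 34 + (1961256 : ℝ) / 36 * y ^ 36 + (-1307504 : ℝ) / 38 * y ^ 38 + (735471 : ℝ) / 40 * y ^ 40 + (-346104 : ℝ) / 42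 * y ^ 42 + (134596 : ℝ) / 44 * y ^ 44 + (-42504 : ℝ) / 46 * y ^ 46 + (10626 : ℝ) / 48 * y ^ 48 + (-2024 : ℝ) / 50 * y ^ 50 + (276 : ℝ) / 52 * y ^ 52 + (-24 : ℝ) / 54 * y ^ 54 + (1 : ℝ) / 56 * y ^ 56) ((1 : ℝ) * x ^ 7 + (-24 : ℝ) * x ^ 9 + (276 : ℝ) * x ^ 11 + (-2024 : ℝ) * x ^ 13 + (10626 : ℝ) * x ^ 15 + (-42504 : ℝ) * x ^ 17 + (134596 : ℝ) * x ^ 19 + (-346104 : ℝ) * x ^ 21 + (735471 : ℝ) * x ^ 23 + (-1307504 : ℝ) * x ^ 25 + (1961256 : ℝ) * x ^ 27 + (-2496144 : ℝ) * x ^ 29 + (2704156 : ℝ) * x ^ 31 + (-2496144 : ℝ) * x ^ 33 + (1961256 : ℝ) * x ^ 35 + (-1307504 : ℝ) * x ^ 37 + (735471 : ℝ) * x ^ 39 + (-346104 : ℝ) * x ^ 41 + (134596 : ℝ) * x ^ 43 + (-42504 : ℝ) * x ^ 45 + (10626 : ℝ) * x ^ 47 + (-2024 : ℝ) * x ^ 49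 + (276 : ℝ) * x ^ 51 + (-24 : ℝ) * x ^ 53 + (1 : ℝ) * x ^ 55) x := by
        intro x _
        have h := ((((((((((((((((((((((((((hasDerivAt_pow 8 x).const_mul ((1 : ℝ) / 8)).add ((hasDerivAt_pow 10 x).const_mul ((-24 : ℝ) / 10))).add ((hasDerivAt_pow 12 x).const_mul ((276 : ℝ) / 12))).add ((hasDerivAt_pow 14 x).const_mul ((-2024 : ℝ) / 14))).add ((hasDerivAt_pow 16 x).const_mul ((10626 : ℝ) / 16))).add ((hasDerivAt_pow 18 x).const_mul ((-42504 : ℝ) / 18))).add ((hasDerivAt_pow 20 x).const_mul ((134596 : ℝ) / 20))).add ((hasDerivAt_pow 22 x).const_mul ((-346104 : ℝ) / 22))).add ((hasDerivAt_pow 24 x).const_mul ((735471 : ℝ) / 24))).add ((hasDerivAt_pow 26 x).const_mul ((-1307504 : ℝ) / 26))).add ((hasDerivAt_pow 28 x).const_mul ((1961256 : ℝ) / 28))).add ((hasDerivAt_pow 30 x).const_mul ((-2496144 : ℝ) / 30))).add ((hasDerivAt_pow 32 x).const_mul ((2704156 : ℝ) / 32))).add ((hasDerivAt_pow 34 x).const_mul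 ((-2496144 : ℝ) / 34))).add ((hasDerivAt_pow 36 x).const_mul ((1961256 : ℝ) / 36))).add ((hasDerivAt_pow 38 x).const_mul ((-1307504 : ℝ) / 38))).add ((hasDerivAt_pow 40 x).const_mul ((735471 : ℝ) / 40))).add ((hasDerivAt_pow 42 x).const_mul ((-346104 : ℝ) / 42))).add ((hasDerivAt_pow 44 x).const_mul ((134596 : ℝ) / 44))).add ((hasDerivAt_pow 46 x).const_mul ((-42504 : ℝ) / 46))).add ((hasDerivAt_pow 48 x).const_mul ((10626 : ℝ) / 48))).add ((hasDerivAt_pow 50 x).const_mul ((-2024 : ℝ) / 50))).add ((hasDerivAt_pow 52 x).const_mul ((276 : ℝ) / 52))).add ((hasDerivAt_pow 54 x).const_mul ((-24 : ℝ) / 54))).add ((hasDerivAt_pow 56 x).const_mul ((1 : ℝ) / 56)))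
        refine h.congr_deriv ?_
        norm_num
        try ring
      rw [MeasureTheory.setIntegral_congr_fun measurableSet_Ioo hpoly1,
          MeasureTheory.setIntegral_congr_fun measurableSet_Ioo hpoly2,
          ← MeasureTheory.integral_Ioc_eq_integral_Ioo, ← MeasureTheory.integral_Ioc_eq_integral_Ioo,
          ← intervalIntegral.integral_of_le (zero_le_one : (0:ℝ) ≤ 1),
          ← intervalIntegral.integral_of_le (zero_le_one : (0:ℝ) ≤ 1),
          intervalIntegral.integral_eq_sub_of_hasDerivAt hQ1 ((by fun_prop : Continuous (fun r : ℝ => (256 : ℝ) * r ^ 7 + (-15360 : ℝ) * r ^ 9 + (382464 : ℝ) * r ^ 11 + (-5350400 : ℝ) * r ^ 13 + (48770304 : ℝ) * r ^ 15 + (-315684864 : ℝ) * r ^ 17 + (1532354560 : ℝ) * r ^ 19 + (-5786136576 : ℝ) * r ^ 21 + (17436418560 : ℝ) * r ^ 23 + (-42706036736 : ℝ) * r ^ 25 + (86128813056 : ℝ) * r ^ 27 + (-144343480320 : ℝ) * r ^ 29 + (202224914944 : ℝ) * r ^ 31 + (-237625466880 : ℝ) * r ^ 33 + (234384758784 : ℝ)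 * r ^ 35 + (-193745260544 : ℝ) * r ^ 37 + (133638278400 : ℝ) * r ^ 39 + (-76350422016 : ℝ) * r ^ 41 + (35723015680 : ℝ) * r ^ 43 + (-13461144576 : ℝ) * r ^ 45 + (3985572096 : ℝ) * r ^ 47 + (-892897280 : ℝ) * r ^ 49 + (142301184 : ℝ) * r ^ 51 + (-14376960 : ℝ) * r ^ 53 + (692224 : ℝ) * r ^ 55)).intervalIntegrable 0 1),
          intervalIntegral.integral_eq_sub_of_hasDerivAt hQ2 ((by fun_prop : Continuous (fun r : ℝ => (1 : ℝ) * r ^ 7 + (-24 : ℝ) * r ^ 9 + (276 : ℝ) * r ^ 11 + (-2024 : ℝ) * r ^ 13 + (10626 : ℝ) * r ^ 15 + (-42504 : ℝ) * r ^ 17 + (134596 : ℝ) * r ^ 19 + (-346104 : ℝ) * r ^ 21 + (735471 : ℝ) * r ^ 23 + (-1307504 : ℝ) * r ^ 25 + (1961256 : ℝ) * r ^ 27 + (-2496144 : ℝ) * r ^ 29 + (2704156 : ℝ) * r ^ 31 + (-2496144 : ℝ) * r ^ 33 + (1961256 : ℝ) * r ^ 35 + (-1307504 : ℝ) * r ^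 37 + (735471 : ℝ) * r ^ 39 + (-346104 : ℝ) * r ^ 41 + (134596 : ℝ) * r ^ 43 + (-42504 : ℝ) * r ^ 45 + (10626 : ℝ) * r ^ 47 + (-2024 : ℝ) * r ^ 49 + (276 : ℝ) * r ^ 51 + (-24 : ℝ) * r ^ 53 + (1 : ℝ) * r ^ 55)).intervalIntegrable 0 1)]
      norm_num
  have e1 : (∫ x in Metric.ball (0 : EuclideanSpace ℝ (Fin m)) 1,
        (deriv (deriv (Vtest m)) ‖x‖ + ((m : ℝ) - 1) * deriv (Vtest m) ‖x‖ / ‖x‖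
          + 2 * ((m : ℝ) - 4) * Vtest m ‖x‖ / ‖x‖ ^ 2) ^ 2)
      = (m : ℝ) * (volume (Metric.ball (0 : EuclideanSpace ℝ (Fin m)) 1)).toReal
          * ∫ r in Set.Ioo (0 : ℝ) 1, r ^ (m - 1) *
              (deriv (deriv (Vtest m)) r + ((m : ℝ) - 1) * deriv (Vtest m) r / r
                + 2 * ((m : ℝ) - 4) * Vtest m r / r ^ 2) ^ 2 :=
    ball_int m hm1 (fun ρ => (deriv (deriv (Vtest m)) ρ + ((m : ℝ) - 1) * deriv (Vtest m) ρ / ρ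
      + 2 * ((m : ℝ) - 4) * Vtest m ρ / ρ ^ 2) ^ 2)
  have e2 : (∫ x in Metric.ball (0 : EuclideanSpace ℝ (Fin m)) 1, (Vtest m ‖x‖) ^ 2 / ‖x‖ ^ 4)
      = (m : ℝ) * (volume (Metric.ball (0 : EuclideanSpace ℝ (Fin m)) 1)).toReal
          * ∫ r in Set.Ioo (0 : ℝ) 1, r ^ (m - 1) * (Vtest m r ^ 2 / r ^ 4) :=
    ball_int m hm1 (fun ρ => Vtest m ρ ^ 2 / ρ ^ 4)
  rw [e1, e2]
  have hvol : 0 < (volume (Metric.ball (0 : EuclideanSpace ℝ (Fin m)) 1)).toReal := by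
    haveI : NeZero m := ⟨by omega⟩
    exact ENNReal.toReal_pos (ne_of_gt (Metric.measure_ball_pos volume 0 one_pos))
      (ne_of_lt measure_ball_lt_top)
  have hmpos : (0 : ℝ) < (m : ℝ) := by
    have : 0 < m := by omega
    exact_mod_cast this
  have hC : 0 < (m : ℝ) * (volume (Metric.ball (0 : EuclideanSpace ℝ (Fin m)) 1)).toReal :=
    mul_pos hmpos hvol
  nlinarith [mul_neg_of_pos_of_neg hC key]
end
end

section
/- Let m ≥ 2 be an integer and let u : ℝ^m ∖ {0} → ℝ^{m²} be the Misawa–Nakauchi map with components u_{ij}(x) = (1/√(m(m−1)))(−δ_{ij} + m x_i x_j / r²). Then for every x ∈ ℝ^m ∖ {0}, the squared norm of the Hessian satisfies |∇²u(x)|² = Σ_{k,l,i,j} (∂_l ∂_k u_{ij}(x))² = 2m(m+4)/r(x)⁴. -/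
noncomputable section

/-- Partial derivative of `f` in the `k`-th coordinate direction. -/
def pd {m : ℕ} (k : Fin m) (f : EuclideanSpace ℝ (Fin m) → ℝ)
    (x : EuclideanSpace ℝ (Fin m)) : ℝ :=
  fderiv ℝ f x (EuclideanSpace.single k 1)

/-- Euclidean Laplacian `Δf = Σ_k ∂²f/∂x_k²`. -/
def lap {m : ℕ} (f : EuclideanSpace ℝ (Fin m) → ℝ)
    (x : EuclideanSpace ℝ (Fin m)) : ℝ :=
  ∑ k : Fin m, pd k (pd k f) x

/-- The Misawa–Nakauchi map `u_{ij}(x) = (1/√(m(m−1)))(−δ_{ij} + m xᵢxⱼ/r²)`. -/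
def uMN (m : ℕ) (i j : Fin m) (x : EuclideanSpace ℝ (Fin m)) : ℝ :=
  (1 / Real.sqrt ((m : ℝ) * ((m : ℝ) - 1))) *
    (-(if i = j then (1 : ℝ) else 0) + (m : ℝ) * x i * x j / ‖x‖ ^ 2)

set_option maxHeartbeats 1000000

section Aux
open Finset
variable {m : ℕ}
local notation "E" => EuclideanSpace ℝ (Fin m)

def dd {m : ℕ} (i k : Fin m) : ℝ := if i = k then 1 else 0

lemma dd_symm (k l : Fin m) : dd l k = dd k l := by simp [dd, eq_comm]

lemma sum_dd_mul_dd (k l : Fin m) : ∑ i, dd k i * dd l i = dd k l := by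
  simp [dd, ite_and, Finset.sum_ite_eq]

lemma sum_dd_mul_dd' (k l : Fin m) : ∑ i, dd i k * dd i l = dd k l := by
  simp [dd, ite_and, Finset.sum_ite_eq', eq_comm (a := k)]

lemma sum_dd_mul' (y : Fin m → ℝ) (k : Fin m) : ∑ i, dd i k * y i = y k := by
  simp [dd, Finset.sum_ite_eq']

lemma dd_self (k : Fin m) : dd k k = 1 := by simp [dd]

lemma sum_dd_mul (y : Fin m → ℝ) (k : Fin m) : ∑ i, dd k i * y i = y k := by
  simp [dd, Finset.sum_ite_eq]

lemma L2 (y : Fin m → ℝ) (k l : Fin m) (a b c A B C : ℝ) :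
    ∑ i, (a * dd i k + b * dd i l + c * y i) * (A * dd i k + B * dd i l + C * y i)
      = a*A + b*B + (a*B + A*b) * dd k l + c*C*(∑ i, y i^2) + (a*C+A*c)*y k + (b*C+B*c)*y l := by
  have h : ∀ i, (a * dd i k + b * dd i l + c * y i) * (A * dd i k + B * dd i l + C * y i)
      = a*A*(dd i k * dd i k) + b*B*(dd i l * dd i l) + (a*B+A*b)*(dd i k * dd i l)
        + c*C*(y i * y i) + (a*C+A*c)*(dd i k * y i) + (b*C+B*c)*(dd i l * y i) := fun i => by ring
  simp only [h, Finset.sum_add_distrib, ← Finset.mul_sum, sum_dd_mul_dd', dd_self,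
    sum_dd_mul', sq, mul_one]

lemma Lsq (y : Fin m → ℝ) (k l : Fin m) (P Q R : ℝ) :
    ∑ j, (P * dd j l + Q * dd j k + R * y j)^2
      = P^2 + Q^2 + 2*P*Q*dd k l + R^2*(∑ a, y a^2) + 2*P*R*y l + 2*Q*R*y k := by
  calc ∑ j, (P * dd j l + Q * dd j k + R * y j)^2
      = ∑ j, (P * dd j l + Q * dd j k + R * y j) * (P * dd j l + Q * dd j k + R * y j) := by
        simp [sq]
    _ = P*P + Q*Q + (P*Q + P*Q) * dd l k + R*R*(∑ a, y a^2) + (P*R+P*R)*y l + (Q*R+Q*R)*y k :=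
        L2 y l k P Q R P Q R
    _ = _ := by rw [dd_symm]; ring

lemma hkl_lemma (y : Fin m → ℝ) (qv : ℝ) (hv : (∑ a, y a ^ 2) = qv) (hq : qv ≠ 0)
    (k l : Fin m) :
    (∑ i, ∑ j, ((dd i k * dd j l + dd j k * dd i l) / qv
        - 2*(dd i k * y j * y l + dd j k * y i * y l + dd i l * y j * y k + dd j l * y i * y k
             + dd k l * y i * y j) / qv^2
        + 8 * y i * y j * y k * y l / qv^3) ^ 2)
      = 2/qv^2 + 6*(dd k l*dd k l)/qv^2 - 8*dd k l*y k*y l/qv^3 := by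
  have step1 : ∀ i : Fin m,
      (∑ j, ((dd i k * dd j l + dd j k * dd i l) / qv
        - 2*(dd i k * y j * y l + dd j k * y i * y l + dd i l * y j * y k + dd j l * y i * y k
             + dd k l * y i * y j) / qv^2
        + 8 * y i * y j * y k * y l / qv^3) ^ 2)
      = (dd i k/qv - 2*y i*y k/qv^2)^2 + (dd i l/qv - 2*y i*y l/qv^2)^2
        + 2*(dd i k/qv - 2*y i*y k/qv^2)*(dd i l/qv - 2*y i*y l/qv^2)*dd k l
        + (-2*dd i k*y l/qv^2 - 2*dd i l*y k/qv^2 + (-2*dd k l/qv^2 + 8*y k*y l/qv^3)*y i)^2*qv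
        + 2*(dd i k/qv - 2*y i*y k/qv^2)
          *(-2*dd i k*y l/qv^2 - 2*dd i l*y k/qv^2 + (-2*dd k l/qv^2 + 8*y k*y l/qv^3)*y i)*y l
        + 2*(dd i l/qv - 2*y i*y l/qv^2)
          *(-2*dd i k*y l/qv^2 - 2*dd i l*y k/qv^2 + (-2*dd k l/qv^2 + 8*y k*y l/qv^3)*y i)*y k := by
    intro i
    have h := Lsq y k l (dd i k/qv - 2*y i*y k/qv^2) (dd i l/qv - 2*y i*y l/qv^2)
      (-2*dd i k*y l/qv^2 - 2*dd i l*y k/qv^2 + (-2*dd k l/qv^2 + 8*y k*y l/qv^3)*y i)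
    rw [hv] at h
    rw [← h]
    exact Finset.sum_congr rfl fun j _ => by ring
  calc (∑ i, ∑ j, ((dd i k * dd j l + dd j k * dd i l) / qv
      - 2*(dd i k * y j * y l + dd j k * y i * y l + dd i l * y j * y k + dd j l * y i * y k
           + dd k l * y i * y j) / qv^2
      + 8 * y i * y j * y k * y l / qv^3) ^ 2)
      = ∑ i : Fin m, ((1/qv^2)*(dd i k*dd i k) + (1/qv^2)*(dd i l*dd i l)
          + (2*dd k l/qv^2)*(dd i k*dd i l)
          + (4*(dd k l*dd k l)/qv^3 + 4*y l^2/qv^4 - 8*y k*y l*dd k l/qv^4 + 4*y k^2/qv^4)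
            *(y i*y i)
          + (-4*y k/qv^3)*(dd i k*y i) + (-4*y l/qv^3)*(dd i l*y i)) :=
        Finset.sum_congr rfl fun i _ => by rw [step1 i]; field_simp; ring
    _ = (1/qv^2)*(∑ i, dd i k*dd i k) + (1/qv^2)*(∑ i, dd i l*dd i l)
          + (2*dd k l/qv^2)*(∑ i, dd i k*dd i l)
          + (4*(dd k l*dd k l)/qv^3 + 4*y l^2/qv^4 - 8*y k*y l*dd k l/qv^4 + 4*y k^2/qv^4)
            *(∑ i, y i*y i)
          + (-4*y k/qv^3)*(∑ i, dd i k*y i) + (-4*y l/qv^3)*(∑ i, dd i l*y i) := by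
        simp only [Finset.sum_add_distrib, Finset.mul_sum]
    _ = _ := by
        have hyy : ∑ i, y i * y i = qv := by
          rw [← hv]; exact Finset.sum_congr rfl fun i _ => (sq (y i)).symm
        rw [sum_dd_mul_dd', sum_dd_mul_dd', sum_dd_mul_dd', sum_dd_mul', sum_dd_mul', hyy,
          dd_self, dd_self]
        field_simp
        ring

lemma key (m : ℕ) (y : Fin m → ℝ) (qv : ℝ) (hv : (∑ a, y a ^ 2) = qv) (hq : qv ≠ 0) :
    ∑ k, ∑ l, ∑ i, ∑ j,
      ((dd i k * dd j l + dd j k * dd i l) / qv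
        - 2*(dd i k * y j * y l + dd j k * y i * y l + dd i l * y j * y k + dd j l * y i * y k
             + dd k l * y i * y j) / qv^2
        + 8 * y i * y j * y k * y l / qv^3) ^ 2
      = (2*(m:ℝ)^2 + 6*(m:ℝ) - 8) / qv^2 := by
  have h2 : ∀ k : Fin m,
      (∑ l : Fin m, (2/qv^2 + 6*(dd k l*dd k l)/qv^2 - 8*dd k l*y k*y l/qv^3))
        = (m:ℝ)*(2/qv^2) + 6/qv^2 - (8*y k/qv^3)*y k := by
    intro k
    calc (∑ l : Fin m, (2/qv^2 + 6*(dd k l*dd k l)/qv^2 - 8*dd k l*y k*y l/qv^3))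
        = ∑ l : Fin m, (2/qv^2 + ((6/qv^2)*(dd k l*dd k l) - (8*y k/qv^3)*(dd k l*y l))) :=
          Finset.sum_congr rfl fun l _ => by ring
      _ = ∑ l : Fin m, (2/qv^2)
            + ((6/qv^2)*(∑ l, dd k l*dd k l) - (8*y k/qv^3)*(∑ l, dd k l*y l)) := by
          rw [Finset.sum_add_distrib, Finset.sum_sub_distrib, Finset.mul_sum, Finset.mul_sum]
      _ = _ := by
          rw [sum_dd_mul_dd, sum_dd_mul, dd_self, Finset.sum_const, Finset.card_univ,
            Fintype.card_fin, nsmul_eq_mul]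
          ring
  calc ∑ k, ∑ l, ∑ i, ∑ j,
      ((dd i k * dd j l + dd j k * dd i l) / qv
        - 2*(dd i k * y j * y l + dd j k * y i * y l + dd i l * y j * y k + dd j l * y i * y k
             + dd k l * y i * y j) / qv^2
        + 8 * y i * y j * y k * y l / qv^3) ^ 2
      = ∑ k : Fin m, ((m:ℝ)*(2/qv^2) + 6/qv^2 - (8*y k/qv^3)*y k) :=
        Finset.sum_congr rfl fun k _ => by
          rw [← h2 k]
          exact Finset.sum_congr rfl fun l _ => hkl_lemma y qv hv hq k l
    _ = ∑ k : Fin m, ((m:ℝ)*(2/qv^2) + 6/qv^2) - (8/qv^3)*(∑ k, y k * y k) := by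
        rw [Finset.sum_sub_distrib, Finset.mul_sum]
        congr 1
        exact Finset.sum_congr rfl fun k _ => by ring
    _ = (m:ℝ)*((m:ℝ)*(2/qv^2) + 6/qv^2) - (8/qv^3)*qv := by
        rw [Finset.sum_const, Finset.card_univ, Fintype.card_fin, nsmul_eq_mul]
        congr 1
        rw [← hv]
        congr 1
        exact Finset.sum_congr rfl fun i _ => (sq (y i)).symm
    _ = (2*(m:ℝ)^2 + 6*(m:ℝ) - 8) / qv^2 := by field_simp

lemma norm_sq_eq (y : E) : ‖y‖ ^ 2 = ∑ k, y k ^ 2 := by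
  rw [EuclideanSpace.norm_eq, Real.sq_sqrt (by positivity)]
  simp [sq_abs]

lemma hasFDerivAt_normsq (y : E) :
    HasFDerivAt (fun z : E => ∑ k, z k ^ 2)
      (∑ k : Fin m, (2 * y k) • (EuclideanSpace.proj k : E →L[ℝ] ℝ)) y := by
  have h : ∀ k : Fin m, HasFDerivAt (fun z : E => z k ^ 2)
      ((2 * y k) • (EuclideanSpace.proj k : E →L[ℝ] ℝ)) y := by
    intro k
    have := ((EuclideanSpace.proj k : E →L[ℝ] ℝ).hasFDerivAt (x := y)).fun_mul
      ((EuclideanSpace.proj k : E →L[ℝ] ℝ).hasFDerivAt (x := y))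
    simpa [sq, two_mul, add_smul] using this
  simpa using HasFDerivAt.fun_sum (fun k _ => h k)

lemma proj_single (a k : Fin m) :
    (EuclideanSpace.proj (𝕜 := ℝ) a) (EuclideanSpace.single k (1:ℝ)) = if a = k then 1 else 0 := by
  simp [EuclideanSpace.single_apply]

lemma pd_uMN (i j k : Fin m) (y : E) (hy : y ≠ 0) :
    pd k (uMN m i j) y
      = (1 / Real.sqrt ((m:ℝ) * ((m:ℝ) - 1))) * ((m:ℝ) *
          (((if i = k then (1:ℝ) else 0) * y j + (if j = k then (1:ℝ) else 0) * y i)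
              * (∑ a, y a ^ 2)⁻¹
            - 2 * (y i * y j * y k * ((∑ a, y a ^ 2)⁻¹ * (∑ a, y a ^ 2)⁻¹)))) := by
  have hqne : (∑ a, y a ^ 2) ≠ 0 := by
    rw [← norm_sq_eq]; exact pow_ne_zero 2 (norm_ne_zero_iff.mpr hy)
  have hi := (EuclideanSpace.proj (𝕜 := ℝ) i).hasFDerivAt (x := y)
  have hj := (EuclideanSpace.proj (𝕜 := ℝ) j).hasFDerivAt (x := y)
  have hinv : HasFDerivAt (fun z : E => (∑ a, z a ^ 2)⁻¹)
      ((-((∑ a, y a ^ 2) ^ 2)⁻¹) • (∑ k : Fin m, (2 * y k) • (EuclideanSpace.proj (𝕜 := ℝ) k))) y :=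
    (hasDerivAt_inv hqne).comp_hasFDerivAt y (hasFDerivAt_normsq y)
  have h4 := ((((hi.fun_mul hj).fun_mul hinv).const_mul (m:ℝ)).const_add
      (-(if i = j then (1:ℝ) else 0))).const_mul (1 / Real.sqrt ((m : ℝ) * ((m : ℝ) - 1)))
  have hfun : uMN m i j = fun z : E =>
      (1 / Real.sqrt ((m : ℝ) * ((m : ℝ) - 1))) *
        (-(if i = j then (1:ℝ) else 0)
          + (m:ℝ) * ((EuclideanSpace.proj (𝕜 := ℝ) i z) * (EuclideanSpace.proj (𝕜 := ℝ) j z)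
              * (∑ a, z a ^ 2)⁻¹)) := by
    funext z
    show _ = (1 / Real.sqrt ((m : ℝ) * ((m : ℝ) - 1))) *
        (-(if i = j then (1:ℝ) else 0) + (m:ℝ) * (z i * z j * (∑ a, z a ^ 2)⁻¹))
    rw [uMN, norm_sq_eq, div_eq_mul_inv]
    ring
  rw [pd, hfun, h4.fderiv]
  simp only [ContinuousLinearMap.smul_apply, ContinuousLinearMap.add_apply,
    ContinuousLinearMap.coe_smul', Pi.smul_apply, smul_eq_mul,
    ContinuousLinearMap.coe_sum', Finset.sum_apply, proj_single, mul_ite, mul_one, mul_zero,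
    Finset.sum_ite_eq', Finset.mem_univ, if_true]
  simp only [PiLp.proj_apply]
  congr 1
  congr 1
  field_simp
  split_ifs <;> ring

lemma pd2_uMN (i j k l : Fin m) (x : E) (hx : x ≠ 0) :
    pd l (pd k (uMN m i j)) x
      = (1 / Real.sqrt ((m:ℝ) * ((m:ℝ) - 1))) * ((m:ℝ) *
          (((if i = k then (1:ℝ) else 0) * (if j = l then (1:ℝ) else 0)
              + (if j = k then (1:ℝ) else 0) * (if i = l then (1:ℝ) else 0)) / (∑ a, x a ^ 2)
            - 2 * ((if i = k then (1:ℝ) else 0) * x j * x l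
                + (if j = k then (1:ℝ) else 0) * x i * x l
                + (if i = l then (1:ℝ) else 0) * x j * x k
                + (if j = l then (1:ℝ) else 0) * x i * x k
                + (if k = l then (1:ℝ) else 0) * x i * x j) / (∑ a, x a ^ 2) ^ 2
            + 8 * x i * x j * x k * x l / (∑ a, x a ^ 2) ^ 3)) := by
  have hqne : (∑ a, x a ^ 2) ≠ 0 := by
    rw [← norm_sq_eq]; exact pow_ne_zero 2 (norm_ne_zero_iff.mpr hx)
  have hi := (EuclideanSpace.proj (𝕜 := ℝ) i).hasFDerivAt (x := x)
  have hj := (EuclideanSpace.proj (𝕜 := ℝ) j).hasFDerivAt (x := x)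
  have hk := (EuclideanSpace.proj (𝕜 := ℝ) k).hasFDerivAt (x := x)
  have hinv : HasFDerivAt (fun z : E => (∑ a, z a ^ 2)⁻¹)
      ((-((∑ a, x a ^ 2) ^ 2)⁻¹) • (∑ b : Fin m, (2 * x b) • (EuclideanSpace.proj (𝕜 := ℝ) b))) x :=
    (hasDerivAt_inv hqne).comp_hasFDerivAt x (hasFDerivAt_normsq x)
  have hT1 := ((hj.const_mul (if i = k then (1:ℝ) else 0)).fun_add
      (hi.const_mul (if j = k then (1:ℝ) else 0))).fun_mul hinv
  have hT2 := (((hi.fun_mul hj).fun_mul hk).fun_mul (hinv.fun_mul hinv)).const_mul (2:ℝ)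
  have hG := ((hT1.fun_sub hT2).const_mul ((m:ℝ))).const_mul
      (1 / Real.sqrt ((m : ℝ) * ((m : ℝ) - 1)))
  have hev : pd k (uMN m i j) =ᶠ[nhds x] (fun y : E =>
      (1 / Real.sqrt ((m : ℝ) * ((m : ℝ) - 1))) * ((m:ℝ) *
        (((if i = k then (1:ℝ) else 0) * (EuclideanSpace.proj (𝕜 := ℝ) j y)
            + (if j = k then (1:ℝ) else 0) * (EuclideanSpace.proj (𝕜 := ℝ) i y))
            * (∑ a, y a ^ 2)⁻¹
          - 2 * ((EuclideanSpace.proj (𝕜 := ℝ) i y) * (EuclideanSpace.proj (𝕜 := ℝ) j y)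
              * (EuclideanSpace.proj (𝕜 := ℝ) k y)
              * ((∑ a, y a ^ 2)⁻¹ * (∑ a, y a ^ 2)⁻¹))))) :=
    (eventually_ne_nhds hx).mono (fun y hy => pd_uMN i j k y hy)
  rw [pd, hev.fderiv_eq, hG.fderiv]
  simp only [ContinuousLinearMap.smul_apply, ContinuousLinearMap.add_apply,
    ContinuousLinearMap.sub_apply, ContinuousLinearMap.coe_smul', Pi.smul_apply, smul_eq_mul,
    ContinuousLinearMap.coe_sum', Finset.sum_apply, proj_single, mul_ite, mul_one, mul_zero,
    Finset.sum_ite_eq', Finset.mem_univ, if_true]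
  simp only [PiLp.proj_apply]
  congr 1
  congr 1
  field_simp
  split_ifs <;> ring

end Aux

theorem stmt10 (m : ℕ) (hm : 2 ≤ m) (x : EuclideanSpace ℝ (Fin m)) (hx : x ≠ 0) :
    ∑ k : Fin m, ∑ l : Fin m, ∑ i : Fin m, ∑ j : Fin m,
        (pd l (pd k (uMN m i j)) x) ^ 2
      = 2 * (m : ℝ) * ((m : ℝ) + 4) / ‖x‖ ^ 4 := by
  have hm2 : (2:ℝ) ≤ (m:ℝ) := by exact_mod_cast hm
  have hqne : (∑ a, x a ^ 2) ≠ 0 := by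
    rw [← norm_sq_eq]; exact pow_ne_zero 2 (norm_ne_zero_iff.mpr hx)
  have hmm : Real.sqrt ((m:ℝ) * ((m:ℝ) - 1)) ^ 2 = (m:ℝ) * ((m:ℝ) - 1) :=
    Real.sq_sqrt (by nlinarith)
  have hc0 : (1 / Real.sqrt ((m:ℝ) * ((m:ℝ) - 1))) ^ 2 = 1 / ((m:ℝ) * ((m:ℝ) - 1)) := by
    rw [div_pow, one_pow, hmm]
  have hddconv : ∀ a b : Fin m, (if a = b then (1:ℝ) else 0) = dd a b := fun _ _ => rfl
  have h1 : ∀ k l i j : Fin m, (pd l (pd k (uMN m i j)) x) ^ 2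
      = (1 / ((m:ℝ) * ((m:ℝ) - 1))) * ((m:ℝ)^2 *
        ((dd i k * dd j l + dd j k * dd i l) / (∑ a, x a ^ 2)
          - 2*(dd i k * x j * x l + dd j k * x i * x l + dd i l * x j * x k + dd j l * x i * x k
             + dd k l * x i * x j) / (∑ a, x a ^ 2)^2
          + 8 * x i * x j * x k * x l / (∑ a, x a ^ 2)^3) ^ 2) := by
    intro k l i j
    rw [pd2_uMN i j k l x hx]
    simp only [hddconv]
    rw [mul_pow, mul_pow, hc0]
  calc ∑ k : Fin m, ∑ l : Fin m, ∑ i : Fin m, ∑ j : Fin m, (pd l (pd k (uMN m i j)) x) ^ 2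
      = ∑ k : Fin m, ∑ l : Fin m, ∑ i : Fin m, ∑ j : Fin m,
          (1 / ((m:ℝ) * ((m:ℝ) - 1))) * ((m:ℝ)^2 *
            ((dd i k * dd j l + dd j k * dd i l) / (∑ a, x a ^ 2)
              - 2*(dd i k * x j * x l + dd j k * x i * x l + dd i l * x j * x k
                 + dd j l * x i * x k + dd k l * x i * x j) / (∑ a, x a ^ 2)^2
              + 8 * x i * x j * x k * x l / (∑ a, x a ^ 2)^3) ^ 2) :=
        Finset.sum_congr rfl fun k _ => Finset.sum_congr rfl fun l _ =>
          Finset.sum_congr rfl fun i _ => Finset.sum_congr rfl fun j _ => h1 k l i j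
    _ = (1 / ((m:ℝ) * ((m:ℝ) - 1))) * ((m:ℝ)^2 *
          ∑ k : Fin m, ∑ l : Fin m, ∑ i : Fin m, ∑ j : Fin m,
            ((dd i k * dd j l + dd j k * dd i l) / (∑ a, x a ^ 2)
              - 2*(dd i k * x j * x l + dd j k * x i * x l + dd i l * x j * x k
                 + dd j l * x i * x k + dd k l * x i * x j) / (∑ a, x a ^ 2)^2
              + 8 * x i * x j * x k * x l / (∑ a, x a ^ 2)^3) ^ 2) := by
        simp only [← Finset.mul_sum]
    _ = (1 / ((m:ℝ) * ((m:ℝ) - 1))) * ((m:ℝ)^2 *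
          ((2*(m:ℝ)^2 + 6*(m:ℝ) - 8) / (∑ a, x a ^ 2)^2)) := by
        rw [key m (fun a => x a) (∑ a, x a ^ 2) rfl hqne]
    _ = 2 * (m : ℝ) * ((m : ℝ) + 4) / ‖x‖ ^ 4 := by
        have hnorm : ‖x‖ ^ 4 = (∑ a, x a ^ 2)^2 := by
          rw [show (4:ℕ) = 2*2 from rfl, pow_mul, norm_sq_eq]
        rw [hnorm]
        have hm0 : (m:ℝ) ≠ 0 := by nlinarith
        have hm1 : (m:ℝ) - 1 ≠ 0 := by nlinarith
        field_simp
        ring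
end
end
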